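/- arXiv:1511.00293 — 11 statements merged into one kernel-verified Lean document; each statement's English description precedes it below -/
import Mathlib

section
/- Let X be a positive semidefinite Hermitian n×n matrix with eigenvalues x_0 ≥ x_1 ≥ … ≥ x_{n-1} in decreasing order, and let P be an orthogonal projection of rank k+1 (with k+1 ≤ n). Then trace(P·X) ≤ x_0 + x_1 + … + x_k. -/
open ComplexOrder Matrix

lemma kyfan_comb (n k : ℕ) (hk : k + 1 ≤ n) (x d : Fin n → ℝ) (hx : Antitone x)
    (hd0 : ∀ i, 0 ≤ d i) (hd1 : ∀ i, d i ≤ 1) (hsum : ∑ i, d i = k + 1) :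
    ∑ i, x i * d i ≤ ∑ i : Fin (k + 1), x (Fin.castLE hk i) := by
  set K : Fin n := ⟨k, hk⟩ with hK
  set e : Fin n → ℝ := fun i => if (i : ℕ) < k + 1 then 1 else 0 with he
  have hset : Finset.univ.filter (fun i : Fin n => (i : ℕ) < k + 1)
      = Finset.univ.map (Fin.castLEEmb hk) := by
    ext i
    simp only [Finset.mem_filter, Finset.mem_univ, true_and, Finset.mem_map, Fin.castLEEmb,
      Function.Embedding.coeFn_mk]
    constructor
    · intro h; exact ⟨⟨i, h⟩, by simp [Fin.ext_iff]⟩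
    · rintro ⟨j, rfl⟩; exact Nat.lt_of_lt_of_le j.2 le_rfl
  have hesum : ∑ i, e i = k + 1 := by
    rw [he]
    rw [Finset.sum_ite, Finset.sum_const, Finset.sum_const, hset]
    simp
  have hxe : ∑ i : Fin (k+1), x (Fin.castLE hk i) = ∑ i, x i * e i := by
    have : ∀ i, x i * e i = if (i : ℕ) < k + 1 then x i else 0 := by
      intro i; rw [he]; by_cases h : (i:ℕ) < k+1 <;> simp [h]
    simp_rw [this]
    rw [← Finset.sum_filter, hset, Finset.sum_map]
    rfl
  have key : ∀ i, x i * (d i - e i) ≤ x K * (d i - e i) := by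
    intro i
    rcases lt_or_ge (i : ℕ) (k+1) with h | h
    · have he' : e i = 1 := if_pos h
      have hd : d i - e i ≤ 0 := by rw [he']; linarith [hd1 i]
      have hxK : x K ≤ x i := hx (by simp [hK, Fin.le_def]; omega)
      nlinarith
    · have he' : e i = 0 := if_neg (by omega)
      have hd : 0 ≤ d i - e i := by rw [he']; linarith [hd0 i]
      have hxK : x i ≤ x K := hx (by simp [hK, Fin.le_def]; omega)
      nlinarith
  have : ∑ i, x i * d i - ∑ i, x i * e i ≤ 0 := by
    have : ∑ i, x i * (d i - e i) ≤ ∑ i, x K * (d i - e i) :=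
      Finset.sum_le_sum (fun i _ => key i)
    simp only [mul_sub, Finset.sum_sub_distrib, ← Finset.mul_sum] at this
    rw [hsum, hesum] at this
    linarith
  linarith [hxe]

lemma trace_idem_eq_rank {n : ℕ} (P : Matrix (Fin n) (Fin n) ℂ) (hP : P.IsHermitian)
    (hP2 : P * P = P) : Matrix.trace P = (P.rank : ℂ) := by
  classical
  set U : Matrix (Fin n) (Fin n) ℂ := (hP.eigenvectorUnitary : Matrix (Fin n) (Fin n) ℂ) with hU
  set μ := hP.eigenvalues with hμdef
  have hUU : U * star U = 1 := (Matrix.mem_unitaryGroup_iff).mp hP.eigenvectorUnitary.2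
  have hsUU : star U * U = 1 := (Matrix.mem_unitaryGroup_iff').mp hP.eigenvectorUnitary.2
  have hD : star U * P * U = diagonal ((RCLike.ofReal ∘ μ) : Fin n → ℂ) :=
    by have h := hP.conjStarAlgAut_star_eigenvectorUnitary; rwa [Unitary.conjStarAlgAut_apply, Unitary.coe_star, star_star] at h
  have hDidem : diagonal ((RCLike.ofReal ∘ μ) : Fin n → ℂ)
      * diagonal ((RCLike.ofReal ∘ μ) : Fin n → ℂ)
      = diagonal ((RCLike.ofReal ∘ μ) : Fin n → ℂ) := by
    rw [← hD]
    calc (star U * P * U) * (star U * P * U) = star U * (P * (U * star U) * P) * U := by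
          noncomm_ring
      _ = star U * P * U := by rw [hUU, mul_one, hP2]
  have hμ01 : ∀ i, μ i = 0 ∨ μ i = 1 := by
    intro i
    have h := congrFun (congrFun hDidem i) i
    simp only [diagonal_mul_diagonal, diagonal_apply_eq, Function.comp_apply, Pi.mul_apply] at h
    have h2 : μ i * μ i = μ i := by exact_mod_cast h
    have h3 : μ i * (μ i - 1) = 0 := by ring_nf; linarith
    rcases mul_eq_zero.mp h3 with h4 | h4
    · exact Or.inl h4
    · exact Or.inr (by linarith)
  have htr : Matrix.trace P = ∑ i, (μ i : ℂ) := by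
    conv_lhs => rw [hP.spectral_theorem, Unitary.conjStarAlgAut_apply]
    rw [Matrix.trace_mul_cycle, ← hU, hsUU, one_mul, Matrix.trace_diagonal]
    rfl
  have hrank : P.rank = Fintype.card {i // μ i ≠ 0} := hP.rank_eq_card_non_zero_eigs
  have : ∑ i, (μ i : ℂ) = ((Finset.univ.filter (fun i => μ i ≠ 0)).card : ℂ) := by
    rw [← Finset.sum_boole]
    exact Finset.sum_congr rfl (fun i _ => by rcases hμ01 i with h | h <;> simp [h])
  rw [htr, this, hrank, Fintype.card_subtype]

/-- Ky Fan's maximum principle (finite dimension): if `X` is a positive semidefinite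
Hermitian matrix with eigenvalues `x` listed in decreasing order and `P` is an orthogonal
projection of rank `k+1`, then `trace (P * X) ≤ x 0 + … + x k`. -/
theorem ky_fan_maximum_principle (n k : ℕ) (hk : k + 1 ≤ n)
    (X P : Matrix (Fin n) (Fin n) ℂ)
    (hX : X.PosSemidef)
    (hP : P.IsHermitian) (hP2 : P * P = P) (hrank : P.rank = k + 1)
    (x : Fin n → ℝ) (hx : Antitone x)
    (hspec : ∃ σ : Equiv.Perm (Fin n), x = hX.1.eigenvalues ∘ σ) :
    (Matrix.trace (P * X)).re ≤ ∑ i : Fin (k + 1), x (Fin.castLE hk i) := by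
  classical
  obtain ⟨σ, hσ⟩ := hspec
  have hH := hX.1
  set U : Matrix (Fin n) (Fin n) ℂ := (hH.eigenvectorUnitary : Matrix (Fin n) (Fin n) ℂ) with hU
  set lam := hH.eigenvalues with hlam
  have hUU : U * star U = 1 := (Matrix.mem_unitaryGroup_iff).mp hH.eigenvectorUnitary.2
  have hsUU : star U * U = 1 := (Matrix.mem_unitaryGroup_iff').mp hH.eigenvectorUnitary.2
  set Q : Matrix (Fin n) (Fin n) ℂ := star U * P * U with hQdef
  have hQH : Q.IsHermitian := by
    show Qᴴ = Q
    rw [hQdef, Matrix.star_eq_conjTranspose, Matrix.conjTranspose_mul, Matrix.conjTranspose_mul,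
      Matrix.conjTranspose_conjTranspose, hP.eq, mul_assoc]
  have hQidem : Q * Q = Q := by
    rw [hQdef]
    calc (star U * P * U) * (star U * P * U) = star U * (P * (U * star U) * P) * U := by
          noncomm_ring
      _ = star U * P * U := by rw [hUU, mul_one, hP2]
  -- diagonal entries of Q
  set d : Fin n → ℝ := fun i => ∑ j, Complex.normSq (Q i j) with hd
  have hQdiag : ∀ i, Q i i = (d i : ℂ) := by
    intro i
    conv_lhs => rw [← hQidem]
    rw [Matrix.mul_apply, hd]
    push_cast
    exact Finset.sum_congr rfl fun j _ => by
      rw [← hQH.apply j i, Complex.star_def, Complex.mul_conj]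
  have hd0 : ∀ i, 0 ≤ d i := fun i =>
    Finset.sum_nonneg fun j _ => Complex.normSq_nonneg _
  have hd1 : ∀ i, d i ≤ 1 := by
    intro i
    have h1 : Complex.normSq (Q i i) ≤ d i := by
      rw [hd]
      exact Finset.single_le_sum (f := fun j => Complex.normSq (Q i j))
        (fun j _ => Complex.normSq_nonneg _) (Finset.mem_univ i)
    rw [hQdiag i] at h1
    simp only [Complex.normSq_ofReal] at h1
    nlinarith [hd0 i]
  have hdsum : ∑ i, d i = k + 1 := by
    have htrQ : Matrix.trace Q = ((k : ℂ) + 1) := by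
      rw [hQdef, Matrix.trace_mul_cycle, hUU, one_mul,
        trace_idem_eq_rank P hP hP2, hrank]
      push_cast; ring
    have : ∑ i, Q i i = ((k : ℂ) + 1) := htrQ
    rw [Finset.sum_congr rfl (fun i _ => hQdiag i)] at this
    exact_mod_cast this
  -- trace (P * X) in terms of d and lam
  have htrace : Matrix.trace (P * X) = ∑ i, (d i : ℂ) * (lam i : ℂ) := by
    conv_lhs => rw [hH.spectral_theorem, Unitary.conjStarAlgAut_apply]
    have : P * (U * diagonal ((RCLike.ofReal ∘ lam) : Fin n → ℂ) * star U)
        = (P * U * diagonal ((RCLike.ofReal ∘ lam) : Fin n → ℂ)) * star U := by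
      noncomm_ring
    rw [this, Matrix.trace_mul_cycle]
    have : star U * (P * U) * diagonal ((RCLike.ofReal ∘ lam) : Fin n → ℂ)
        = Q * diagonal ((RCLike.ofReal ∘ lam) : Fin n → ℂ) := by
      rw [hQdef]; noncomm_ring
    rw [this, Matrix.trace]
    apply Finset.sum_congr rfl
    intro i _
    rw [Matrix.diag_apply, Matrix.mul_diagonal, hQdiag i]
    rfl
  have hre : (Matrix.trace (P * X)).re = ∑ i, lam i * d i := by
    rw [htrace]
    rw [Complex.re_sum]
    apply Finset.sum_congr rfl
    intro i _
    rw [← Complex.ofReal_mul]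
    simp [mul_comm]
  rw [hre]
  have hreindex : ∑ i, lam i * d i = ∑ j, x j * d (σ j) := by
    rw [← Equiv.sum_comp σ (fun i => lam i * d i)]
    exact Finset.sum_congr rfl fun j _ => by rw [hσ]; rfl
  rw [hreindex]
  exact kyfan_comb n k hk x (fun j => d (σ j)) hx (fun j => hd0 _) (fun j => hd1 _)
    (by rw [Equiv.sum_comp σ d, hdsum])
end

section
/- Let X and Y be positive semidefinite Hermitian n×n matrices with eigenvalues in decreasing order x_0 ≥ … ≥ x_{n-1} and y_0 ≥ … ≥ y_{n-1}, respectively. Then ∑_{i} (x_i − y_i)² ≤ ‖X − Y‖₂², where ‖·‖₂ is the Frobenius (Hilbert–Schmidt) norm. -/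
open ComplexOrder Matrix

open Finset in
private lemma hw_tele (f : ℕ → ℝ) {i n : ℕ} (h : i ≤ n) :
    ∑ k ∈ Ico i n, (f k - f (k+1)) = f i - f n := by
  rw [Finset.sum_Ico_eq_sub _ h, Finset.sum_range_sub' f, Finset.sum_range_sub' f]
  ring

open Finset in
private lemma hw_filt {k n : ℕ} (h : k < n) :
    (range n).filter (fun i => i ≤ k) = range (k+1) := by
  ext i; simp only [mem_filter, mem_range]; omega

open Finset in
private lemma hw_filt' (i n : ℕ) :
    (range n).filter (fun a => i ≤ a) = Ico i n := by
  ext a; simp only [mem_filter, mem_range, mem_Ico]; omega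

open Finset in
private lemma hw_swap3 {M : Type*} [AddCommMonoid M] (s u v : Finset ℕ) (f : ℕ → ℕ → ℕ → M) :
    ∑ i ∈ s, ∑ k ∈ u, ∑ l ∈ v, f i k l = ∑ k ∈ u, ∑ l ∈ v, ∑ i ∈ s, f i k l :=
  calc ∑ i ∈ s, ∑ k ∈ u, ∑ l ∈ v, f i k l
      = ∑ k ∈ u, ∑ i ∈ s, ∑ l ∈ v, f i k l := Finset.sum_comm
    _ = ∑ k ∈ u, ∑ l ∈ v, ∑ i ∈ s, f i k l :=
        Finset.sum_congr rfl fun k _ => Finset.sum_comm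

open Finset in
private lemma hw_swap4 {M : Type*} [AddCommMonoid M] (s t u v : Finset ℕ) (f : ℕ → ℕ → ℕ → ℕ → M) :
    ∑ i ∈ s, ∑ j ∈ t, ∑ k ∈ u, ∑ l ∈ v, f i j k l
      = ∑ k ∈ u, ∑ l ∈ v, ∑ i ∈ s, ∑ j ∈ t, f i j k l :=
  calc ∑ i ∈ s, ∑ j ∈ t, ∑ k ∈ u, ∑ l ∈ v, f i j k l
      = ∑ i ∈ s, ∑ k ∈ u, ∑ j ∈ t, ∑ l ∈ v, f i j k l :=
        Finset.sum_congr rfl fun i _ => Finset.sum_comm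
    _ = ∑ k ∈ u, ∑ i ∈ s, ∑ j ∈ t, ∑ l ∈ v, f i j k l := Finset.sum_comm
    _ = ∑ k ∈ u, ∑ i ∈ s, ∑ l ∈ v, ∑ j ∈ t, f i j k l :=
        Finset.sum_congr rfl fun k _ => Finset.sum_congr rfl fun i _ => Finset.sum_comm
    _ = ∑ k ∈ u, ∑ l ∈ v, ∑ i ∈ s, ∑ j ∈ t, f i j k l :=
        Finset.sum_congr rfl fun k _ => Finset.sum_comm

open Finset in
/-- Key rearrangement / doubly-substochastic inequality. -/
private lemma hw_key (n : ℕ) (x y : ℕ → ℝ) (hx : Antitone x) (hy : Antitone y)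
    (hxn : x n = 0) (hyn : y n = 0)
    (d : ℕ → ℕ → ℝ) (hd0 : ∀ i j, 0 ≤ d i j)
    (hrow : ∀ i, ∑ j ∈ range n, d i j ≤ 1)
    (hcol : ∀ j, ∑ i ∈ range n, d i j ≤ 1) :
    ∑ i ∈ range n, ∑ j ∈ range n, x i * y j * d i j ≤ ∑ i ∈ range n, x i * y i := by
  set α : ℕ → ℝ := fun k => x k - x (k+1) with hα
  set β : ℕ → ℝ := fun k => y k - y (k+1) with hβ
  have hα0 : ∀ k, 0 ≤ α k := fun k => sub_nonneg.2 (hx (Nat.le_succ k))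
  have hβ0 : ∀ k, 0 ≤ β k := fun k => sub_nonneg.2 (hy (Nat.le_succ k))
  have hxe : ∀ i ∈ range n, x i = ∑ k ∈ range n, if i ≤ k then α k else 0 := by
    intro i hi
    rw [← Finset.sum_filter, hw_filt' i n, hw_tele x (mem_range.1 hi).le, hxn, sub_zero]
  have hye : ∀ i ∈ range n, y i = ∑ k ∈ range n, if i ≤ k then β k else 0 := by
    intro i hi
    rw [← Finset.sum_filter, hw_filt' i n, hw_tele y (mem_range.1 hi).le, hyn, sub_zero]
  set S : ℕ → ℕ → ℝ := fun k l => ∑ i ∈ range (k+1), ∑ j ∈ range (l+1), d i j with hS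
  have hSle : ∀ k ∈ range n, ∀ l ∈ range n, S k l ≤ min (k+1 : ℕ) (l+1 : ℕ) := by
    intro k hk l hl
    have h1 : S k l ≤ (k+1 : ℕ) := by
      calc S k l ≤ ∑ i ∈ range (k+1), ∑ j ∈ range n, d i j := by
            refine Finset.sum_le_sum fun i _ => ?_
            exact Finset.sum_le_sum_of_subset_of_nonneg
              (Finset.range_subset_range.2 (mem_range.1 hl)) (fun j _ _ => hd0 i j)
        _ ≤ ∑ i ∈ range (k+1), 1 := Finset.sum_le_sum fun i _ => hrow i
        _ = (k+1 : ℕ) := by simp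
    have h2 : S k l ≤ (l+1 : ℕ) := by
      rw [hS]
      calc ∑ i ∈ range (k+1), ∑ j ∈ range (l+1), d i j
          = ∑ j ∈ range (l+1), ∑ i ∈ range (k+1), d i j := Finset.sum_comm
        _ ≤ ∑ j ∈ range (l+1), ∑ i ∈ range n, d i j := by
            refine Finset.sum_le_sum fun j _ => ?_
            exact Finset.sum_le_sum_of_subset_of_nonneg
              (Finset.range_subset_range.2 (mem_range.1 hk)) (fun i _ _ => hd0 i j)
        _ ≤ ∑ j ∈ range (l+1), 1 := Finset.sum_le_sum fun j _ => hcol j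
        _ = (l+1 : ℕ) := by simp
    cases le_total (k:ℕ) l with
    | inl h => simpa [Nat.min_eq_left (by omega : k+1 ≤ l+1)] using h1
    | inr h => simpa [Nat.min_eq_right (by omega : l+1 ≤ k+1)] using h2
  have hLHS : ∑ i ∈ range n, ∑ j ∈ range n, x i * y j * d i j
      = ∑ k ∈ range n, ∑ l ∈ range n, α k * β l * S k l := by
    calc ∑ i ∈ range n, ∑ j ∈ range n, x i * y j * d i j
        = ∑ i ∈ range n, ∑ j ∈ range n, ∑ k ∈ range n, ∑ l ∈ range n,
            (if i ≤ k then α k else 0) * (if j ≤ l then β l else 0) * d i j := by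
          refine Finset.sum_congr rfl fun i hi => Finset.sum_congr rfl fun j hj => ?_
          rw [hxe i hi, hye j hj, Finset.sum_mul_sum, Finset.sum_mul]
          exact Finset.sum_congr rfl fun k _ => by rw [Finset.sum_mul]
      _ = ∑ k ∈ range n, ∑ l ∈ range n, ∑ i ∈ range n, ∑ j ∈ range n,
            (if i ≤ k then α k else 0) * (if j ≤ l then β l else 0) * d i j :=
          hw_swap4 _ _ _ _ _
      _ = ∑ k ∈ range n, ∑ l ∈ range n, α k * β l * S k l := by
          refine Finset.sum_congr rfl fun k hk => Finset.sum_congr rfl fun l hl => ?_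
          calc ∑ i ∈ range n, ∑ j ∈ range n,
                (if i ≤ k then α k else 0) * (if j ≤ l then β l else 0) * d i j
              = ∑ i ∈ range n, if i ≤ k then
                  (∑ j ∈ range n, if j ≤ l then α k * β l * d i j else 0) else 0 := by
                refine Finset.sum_congr rfl fun i _ => ?_
                by_cases h1 : i ≤ k
                · simp only [h1, if_true]
                  refine Finset.sum_congr rfl fun j _ => ?_
                  by_cases h2 : j ≤ l <;> simp [h2] <;> ring
                · simp [h1]
            _ = ∑ i ∈ range (k+1), ∑ j ∈ range (l+1), α k * β l * d i j := by
                rw [← Finset.sum_filter, hw_filt (mem_range.1 hk)]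
                exact Finset.sum_congr rfl fun i _ => by
                  rw [← Finset.sum_filter, hw_filt (mem_range.1 hl)]
            _ = α k * β l * S k l := by
                rw [hS, Finset.mul_sum]
                exact Finset.sum_congr rfl fun i _ => by rw [Finset.mul_sum]
  have hRHS : ∑ i ∈ range n, x i * y i
      = ∑ k ∈ range n, ∑ l ∈ range n, α k * β l * min (k+1 : ℕ) (l+1 : ℕ) := by
    calc ∑ i ∈ range n, x i * y i
        = ∑ i ∈ range n, ∑ k ∈ range n, ∑ l ∈ range n,
            (if i ≤ k then α k else 0) * (if i ≤ l then β l else 0) := by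
          refine Finset.sum_congr rfl fun i hi => ?_
          rw [hxe i hi, hye i hi, Finset.sum_mul_sum]
      _ = ∑ k ∈ range n, ∑ l ∈ range n, ∑ i ∈ range n,
            (if i ≤ k then α k else 0) * (if i ≤ l then β l else 0) := hw_swap3 _ _ _ _
      _ = ∑ k ∈ range n, ∑ l ∈ range n, α k * β l * min (k+1 : ℕ) (l+1 : ℕ) := by
          refine Finset.sum_congr rfl fun k hk => Finset.sum_congr rfl fun l hl => ?_
          have hmin : min k l < n := lt_of_le_of_lt (min_le_left k l) (mem_range.1 hk)
          calc ∑ i ∈ range n, (if i ≤ k then α k else 0) * (if i ≤ l then β l else 0)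
              = ∑ i ∈ range n, if i ≤ min k l then α k * β l else 0 := by
                refine Finset.sum_congr rfl fun i _ => ?_
                by_cases h1 : i ≤ k <;> by_cases h2 : i ≤ l <;>
                  simp [h1, h2, le_min_iff]
            _ = ∑ i ∈ range (min k l + 1), α k * β l := by
                rw [← Finset.sum_filter, hw_filt hmin]
            _ = α k * β l * min (k+1 : ℕ) (l+1 : ℕ) := by
                rw [Finset.sum_const, Finset.card_range, nsmul_eq_mul, mul_comm]
                congr 2
                omega
  rw [hLHS, hRHS]
  refine Finset.sum_le_sum fun k hk => Finset.sum_le_sum fun l hl => ?_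
  exact mul_le_mul_of_nonneg_left (hSle k hk l hl) (mul_nonneg (hα0 k) (hβ0 l))

private lemma hw_trace_mul_re (n : ℕ) {A B : Matrix (Fin n) (Fin n) ℂ}
    (hA : A.IsHermitian) (hB : B.IsHermitian) :
    (Matrix.trace (A * B)).re = ∑ i, ∑ j, hA.eigenvalues i * hB.eigenvalues j *
      Complex.normSq ((star (hA.eigenvectorUnitary : Matrix (Fin n) (Fin n) ℂ) *
        (hB.eigenvectorUnitary : Matrix (Fin n) (Fin n) ℂ)) i j) := by
  set U : Matrix (Fin n) (Fin n) ℂ := (hA.eigenvectorUnitary : Matrix (Fin n) (Fin n) ℂ) with hU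
  set V : Matrix (Fin n) (Fin n) ℂ := (hB.eigenvectorUnitary : Matrix (Fin n) (Fin n) ℂ) with hV
  set W : Matrix (Fin n) (Fin n) ℂ := star U * V with hW
  set a := hA.eigenvalues with ha
  set b := hB.eigenvalues with hb
  set Da : Matrix (Fin n) (Fin n) ℂ := Matrix.diagonal (RCLike.ofReal ∘ a) with hDa
  set Db : Matrix (Fin n) (Fin n) ℂ := Matrix.diagonal (RCLike.ofReal ∘ b) with hDb
  have hstarW : star W = star V * U := by
    rw [hW, StarMul.star_mul, star_star]
  have e1 : A * B = U * (Da * (star U * (V * (Db * star V)))) := by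
    conv_lhs => rw [hA.spectral_theorem, hB.spectral_theorem]
    simp only [Unitary.conjStarAlgAut_apply, Matrix.mul_assoc, hDa, hDb, hU, hV, ha, hb]
  have e2 : Matrix.trace (A * B) = Matrix.trace (Da * (W * (Db * star W))) := by
    rw [e1, Matrix.trace_mul_comm]
    congr 1
    simp only [hW, hstarW, Matrix.mul_assoc, star_mul, star_star]
  rw [e2]
  have e3 : Matrix.trace (Da * (W * (Db * star W)))
      = ∑ i, ∑ j, ((a i * b j * Complex.normSq (W i j) : ℝ) : ℂ) := by
    rw [Matrix.trace]
    refine Finset.sum_congr rfl fun i _ => ?_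
    rw [Matrix.diag]
    rw [Matrix.diagonal_mul, Matrix.mul_apply, Finset.mul_sum]
    refine Finset.sum_congr rfl fun j _ => ?_
    rw [Matrix.diagonal_mul, Matrix.star_apply]
    have hco : (RCLike.ofReal : ℝ → ℂ) = Complex.ofReal := rfl
    have hst : (star (W i j)) = (starRingEnd ℂ) (W i j) := rfl
    simp only [Function.comp_apply, hco, hst]
    rw [show (Complex.ofReal (a i)) * (W i j * (Complex.ofReal (b j) * (starRingEnd ℂ) (W i j)))
      = (Complex.ofReal (a i)) * Complex.ofReal (b j) * (W i j * (starRingEnd ℂ) (W i j)) by ring]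
    rw [Complex.mul_conj]
    push_cast
    ring
  rw [e3, Complex.re_sum]
  refine Finset.sum_congr rfl fun i _ => ?_
  rw [Complex.re_sum]
  exact Finset.sum_congr rfl fun j _ => Complex.ofReal_re _

/-- For positive semidefinite Hermitian matrices `X`, `Y` with eigenvalues `x`, `y` in
decreasing order, `∑ (x i - y i)^2 ≤ ‖X - Y‖₂² = trace ((X-Y)ᴴ (X-Y))`. -/
theorem sq_dist_eigenvalues_le_hilbert_schmidt (n : ℕ) (X Y : Matrix (Fin n) (Fin n) ℂ)
    (hX : X.PosSemidef) (hY : Y.PosSemidef)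
    (x y : Fin n → ℝ) (hx : Antitone x) (hy : Antitone y)
    (hxs : ∃ σ : Equiv.Perm (Fin n), x = hX.1.eigenvalues ∘ σ)
    (hys : ∃ σ : Equiv.Perm (Fin n), y = hY.1.eigenvalues ∘ σ) :
    ∑ i : Fin n, (x i - y i) ^ 2 ≤ (Matrix.trace ((X - Y)ᴴ * (X - Y))).re := by
  classical
  obtain ⟨σ, hσ⟩ := hxs
  obtain ⟨τ, hτ⟩ := hys
  set a := hX.1.eigenvalues with ha
  set b := hY.1.eigenvalues with hb
  set U : Matrix (Fin n) (Fin n) ℂ := (hX.1.eigenvectorUnitary : Matrix (Fin n) (Fin n) ℂ) with hU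
  set V : Matrix (Fin n) (Fin n) ℂ := (hY.1.eigenvectorUnitary : Matrix (Fin n) (Fin n) ℂ) with hV
  set W : Matrix (Fin n) (Fin n) ℂ := star U * V with hW
  set dm : Fin n → Fin n → ℝ := fun p q => Complex.normSq (W p q) with hdm
  -- unitarity facts
  have hUU : star U * U = 1 := Matrix.mem_unitaryGroup_iff'.mp hX.1.eigenvectorUnitary.2
  have hUU' : U * star U = 1 := Matrix.mem_unitaryGroup_iff.mp hX.1.eigenvectorUnitary.2
  have hVV : star V * V = 1 := Matrix.mem_unitaryGroup_iff'.mp hY.1.eigenvectorUnitary.2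
  have hVV' : V * star V = 1 := Matrix.mem_unitaryGroup_iff.mp hY.1.eigenvectorUnitary.2
  have hstarW : star W = star V * U := by rw [hW, StarMul.star_mul, star_star]
  have hWW : W * star W = 1 := by
    rw [hW, hstarW]
    calc star U * V * (star V * U) = star U * (V * star V) * U := by
          simp only [Matrix.mul_assoc]
      _ = 1 := by rw [hVV', Matrix.mul_one, hUU]
  have hW'W : star W * W = 1 := by
    rw [hW, hstarW]
    calc star V * U * (star U * V) = star V * (U * star U) * V := by
          simp only [Matrix.mul_assoc]
      _ = 1 := by rw [hUU', Matrix.mul_one, hVV]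
  -- row and column sums of |W i j|^2
  have hrow : ∀ p : Fin n, ∑ q, dm p q = 1 := by
    intro p
    have h1 : ∑ q, ((Complex.normSq (W p q) : ℝ) : ℂ) = 1 := by
      calc ∑ q, ((Complex.normSq (W p q) : ℝ) : ℂ)
          = ∑ q, W p q * star (W p q) := by
            refine Finset.sum_congr rfl fun q _ => ?_
            rw [← Complex.mul_conj]; rfl
        _ = (W * star W) p p := by
            rw [Matrix.mul_apply]
            exact Finset.sum_congr rfl fun q _ => by rw [Matrix.star_apply]
        _ = 1 := by rw [hWW, Matrix.one_apply_eq]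
    have := congrArg Complex.re h1
    rw [Complex.re_sum] at this
    simpa [hdm] using this
  have hcol : ∀ q : Fin n, ∑ p, dm p q = 1 := by
    intro q
    have h1 : ∑ p, ((Complex.normSq (W p q) : ℝ) : ℂ) = 1 := by
      calc ∑ p, ((Complex.normSq (W p q) : ℝ) : ℂ)
          = ∑ p, star (W p q) * W p q := by
            refine Finset.sum_congr rfl fun p _ => ?_
            rw [mul_comm, ← Complex.mul_conj]; rfl
        _ = (star W * W) q q := by
            rw [Matrix.mul_apply]
            exact Finset.sum_congr rfl fun p _ => by rw [Matrix.star_apply]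
        _ = 1 := by rw [hW'W, Matrix.one_apply_eq]
    have := congrArg Complex.re h1
    rw [Complex.re_sum] at this
    simpa [hdm] using this
  -- trace identities
  have hTrXY : (Matrix.trace (X * Y)).re = ∑ i, ∑ j, a i * b j * dm i j :=
    hw_trace_mul_re n hX.1 hY.1
  have hTrXX : (Matrix.trace (X * X)).re = ∑ i, a i ^ 2 := by
    rw [hw_trace_mul_re n hX.1 hX.1]
    refine Finset.sum_congr rfl fun i _ => ?_
    rw [Finset.sum_eq_single i]
    · rw [← hU, hUU, Matrix.one_apply_eq]
      simp [sq]; rfl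
    · intro k _ hk
      rw [← hU, hUU, Matrix.one_apply_ne' hk]
      simp
    · simp
  have hTrYY : (Matrix.trace (Y * Y)).re = ∑ i, b i ^ 2 := by
    rw [hw_trace_mul_re n hY.1 hY.1]
    refine Finset.sum_congr rfl fun i _ => ?_
    rw [Finset.sum_eq_single i]
    · rw [← hV, hVV, Matrix.one_apply_eq]
      simp [sq]; rfl
    · intro k _ hk
      rw [← hV, hVV, Matrix.one_apply_ne' hk]
      simp
    · simp
  have hHerm : (X - Y)ᴴ = X - Y := by
    rw [Matrix.conjTranspose_sub, hX.1, hY.1]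
  have hTr : (Matrix.trace ((X - Y)ᴴ * (X - Y))).re
      = (Matrix.trace (X * X)).re + (Matrix.trace (Y * Y)).re
        - 2 * (Matrix.trace (X * Y)).re := by
    rw [hHerm, Matrix.sub_mul, Matrix.mul_sub, Matrix.mul_sub, Matrix.trace_sub,
      Matrix.trace_sub, Matrix.trace_sub, Matrix.trace_mul_comm Y X]
    simp only [Complex.sub_re]
    ring
  -- nonnegativity and permutation conversions
  have hx0 : ∀ i, 0 ≤ x i := fun i => by
    rw [hσ]; exact hX.eigenvalues_nonneg (σ i)
  have hy0 : ∀ i, 0 ≤ y i := fun i => by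
    rw [hτ]; exact hY.eigenvalues_nonneg (τ i)
  have hsa : ∑ i, a i ^ 2 = ∑ i, x i ^ 2 := by
    rw [hσ]
    exact (Equiv.sum_comp σ (fun p => a p ^ 2)).symm
  have hsb : ∑ i, b i ^ 2 = ∑ i, y i ^ 2 := by
    rw [hτ]
    exact (Equiv.sum_comp τ (fun p => b p ^ 2)).symm
  have hcross : ∑ i, ∑ j, a i * b j * dm i j
      = ∑ i, ∑ j, x i * y j * dm (σ i) (τ j) := by
    rw [hσ, hτ]
    calc ∑ i, ∑ j, a i * b j * dm i j
        = ∑ i, ∑ j, a (σ i) * b j * dm (σ i) j :=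
          (Equiv.sum_comp σ (fun p => ∑ j, a p * b j * dm p j)).symm
      _ = ∑ i, ∑ j, a (σ i) * b (τ j) * dm (σ i) (τ j) :=
          Finset.sum_congr rfl fun i _ =>
            (Equiv.sum_comp τ (fun q => a (σ i) * b q * dm (σ i) q)).symm
      _ = ∑ i, ∑ j, (a ∘ σ) i * (b ∘ τ) j * dm (σ i) (τ j) := rfl
  -- apply the key inequality
  set x' : ℕ → ℝ := fun i => if h : i < n then x ⟨i, h⟩ else 0 with hx'
  set y' : ℕ → ℝ := fun i => if h : i < n then y ⟨i, h⟩ else 0 with hy'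
  set e : ℕ → ℕ → ℝ := fun i j =>
    if h : i < n ∧ j < n then dm (σ ⟨i, h.1⟩) (τ ⟨j, h.2⟩) else 0 with he
  have hx'anti : Antitone x' := by
    refine antitone_nat_of_succ_le fun i => ?_
    by_cases h1 : i + 1 < n
    · have h0 : i < n := by omega
      simp only [hx', dif_pos h1]
      simp only [dif_pos h0]
      exact hx (by simp [Fin.le_def])
    · by_cases h0 : i < n
      · simp only [hx', dif_neg h1]
        simp only [dif_pos h0]
        exact hx0 _
      · simp only [hx', dif_neg h1]
        simp only [dif_neg h0]
        exact le_refl 0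
  have hy'anti : Antitone y' := by
    refine antitone_nat_of_succ_le fun i => ?_
    by_cases h1 : i + 1 < n
    · have h0 : i < n := by omega
      simp only [hy', dif_pos h1]
      simp only [dif_pos h0]
      exact hy (by simp [Fin.le_def])
    · by_cases h0 : i < n
      · simp only [hy', dif_neg h1]
        simp only [dif_pos h0]
        exact hy0 _
      · simp only [hy', dif_neg h1]
        simp only [dif_neg h0]
        exact le_refl 0
  have hx'n : x' n = 0 := by simp only [hx', dif_neg (lt_irrefl n)]
  have hy'n : y' n = 0 := by simp only [hy', dif_neg (lt_irrefl n)]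
  have he0 : ∀ i j, 0 ≤ e i j := by
    intro i j
    simp only [he]
    split
    · exact Complex.normSq_nonneg _
    · exact le_refl 0
  have hrow' : ∀ i, ∑ j ∈ Finset.range n, e i j ≤ 1 := by
    intro i
    by_cases h : i < n
    · have : ∑ j ∈ Finset.range n, e i j = ∑ j : Fin n, dm (σ ⟨i, h⟩) (τ j) := by
        rw [← Fin.sum_univ_eq_sum_range (fun j => e i j) n]
        refine Finset.sum_congr rfl fun j _ => ?_
        simp only [he]
        rw [dif_pos (show i < n ∧ (j:ℕ) < n from ⟨h, j.isLt⟩)]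
      rw [this, Equiv.sum_comp τ (fun q => dm (σ ⟨i, h⟩) q), hrow]
    · have : ∑ j ∈ Finset.range n, e i j = 0 := by
        refine Finset.sum_eq_zero fun j _ => ?_
        simp only [he]; rw [dif_neg (by tauto)]
      rw [this]; norm_num
  have hcol' : ∀ j, ∑ i ∈ Finset.range n, e i j ≤ 1 := by
    intro j
    by_cases h : j < n
    · have : ∑ i ∈ Finset.range n, e i j = ∑ i : Fin n, dm (σ i) (τ ⟨j, h⟩) := by
        rw [← Fin.sum_univ_eq_sum_range (fun i => e i j) n]
        refine Finset.sum_congr rfl fun i _ => ?_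
        simp only [he]
        rw [dif_pos (show (i:ℕ) < n ∧ j < n from ⟨i.isLt, h⟩)]
      rw [this, Equiv.sum_comp σ (fun p => dm p (τ ⟨j, h⟩)), hcol]
    · have : ∑ i ∈ Finset.range n, e i j = 0 := by
        refine Finset.sum_eq_zero fun i _ => ?_
        simp only [he]; rw [dif_neg (by tauto)]
      rw [this]; norm_num
  have hkey := hw_key n x' y' hx'anti hy'anti hx'n hy'n e he0 hrow' hcol'
  have hL : ∑ i ∈ Finset.range n, ∑ j ∈ Finset.range n, x' i * y' j * e i j
      = ∑ i : Fin n, ∑ j : Fin n, x i * y j * dm (σ i) (τ j) := by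
    rw [← Fin.sum_univ_eq_sum_range (fun i => ∑ j ∈ Finset.range n, x' i * y' j * e i j) n]
    refine Finset.sum_congr rfl fun i _ => ?_
    rw [← Fin.sum_univ_eq_sum_range (fun j => x' i * y' j * e i j) n]
    refine Finset.sum_congr rfl fun j _ => ?_
    simp only [hx', hy', he]
    rw [dif_pos i.isLt, dif_pos j.isLt, dif_pos (show (i:ℕ) < n ∧ (j:ℕ) < n from ⟨i.isLt, j.isLt⟩)]
  have hR : ∑ i ∈ Finset.range n, x' i * y' i = ∑ i : Fin n, x i * y i := by
    rw [← Fin.sum_univ_eq_sum_range (fun i => x' i * y' i) n]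
    refine Finset.sum_congr rfl fun i _ => ?_
    simp only [hx', hy', dif_pos i.isLt, Fin.eta]
  rw [hL, hR] at hkey
  -- put everything together
  have hexp : ∑ i : Fin n, (x i - y i) ^ 2
      = ∑ i, x i ^ 2 + ∑ i, y i ^ 2 - 2 * ∑ i, x i * y i := by
    calc ∑ i : Fin n, (x i - y i) ^ 2
        = ∑ i : Fin n, ((x i ^ 2 + y i ^ 2) - 2 * (x i * y i)) :=
          Finset.sum_congr rfl fun i _ => by ring
      _ = ∑ i : Fin n, (x i ^ 2 + y i ^ 2) - ∑ i : Fin n, 2 * (x i * y i) :=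
          Finset.sum_sub_distrib _ _
      _ = ∑ i, x i ^ 2 + ∑ i, y i ^ 2 - 2 * ∑ i, x i * y i := by
          rw [Finset.sum_add_distrib, Finset.mul_sum]
  rw [hTr, hTrXX, hTrYY, hTrXY, hcross, hsa, hsb, hexp]
  linarith
end

section
/- Let X and Y be positive semidefinite Hermitian n×n matrices with decreasing eigenvalue sequences x and y. Then trace(X·Y) ≤ ∑_i x_i·y_i. -/
open ComplexOrder Matrix

private lemma aux_ds_le {n : ℕ} (x y : Fin n → ℝ) (hx : Antitone x) (hy : Antitone y)
    {P : Matrix (Fin n) (Fin n) ℝ} (hP : P ∈ doublyStochastic ℝ (Fin n)) :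
    ∑ i, ∑ j, x i * y j * P i j ≤ ∑ i, x i * y i := by
  have hlin : IsLinearMap ℝ (fun M : Matrix (Fin n) (Fin n) ℝ => ∑ i, ∑ j, x i * y j * M i j) := by
    constructor
    · intro M N; simp [mul_add, Finset.sum_add_distrib]
    · intro c M
      simp only [Matrix.smul_apply, smul_eq_mul, Finset.mul_sum]
      exact Finset.sum_congr rfl fun i _ => Finset.sum_congr rfl fun j _ => by ring
  have hconv : Convex ℝ {M : Matrix (Fin n) (Fin n) ℝ |
      ∑ i, ∑ j, x i * y j * M i j ≤ ∑ i, x i * y i} := convex_halfSpace_le hlin _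
  have hP' : P ∈ convexHull ℝ {M | ∃ σ : Equiv.Perm (Fin n), σ.permMatrix ℝ = M} := by
    rw [← doublyStochastic_eq_convexHull_permMatrix]; exact hP
  refine convexHull_min ?_ hconv hP'
  rintro M ⟨σ, rfl⟩
  have hmono : Monovary x y := fun i j h =>
    hx (le_of_not_ge fun h' => absurd (hy h') (not_le.2 h))
  calc ∑ i, ∑ j, x i * y j * σ.permMatrix ℝ i j = ∑ i, x i * y (σ i) := by
        simp [Equiv.Perm.permMatrix, PEquiv.toMatrix_apply, Equiv.toPEquiv_apply,
          mul_ite, Finset.sum_ite_eq, eq_comm]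
    _ ≤ _ := hmono.sum_mul_comp_perm_le_sum_mul

private lemma aux_trace_eq {n : ℕ} (W : Matrix (Fin n) (Fin n) ℂ) (a b : Fin n → ℝ) :
    Matrix.trace (diagonal (RCLike.ofReal ∘ a) * W * diagonal (RCLike.ofReal ∘ b) * Wᴴ)
    = ∑ i, ∑ j, ((a i * b j * Complex.normSq (W i j) : ℝ) : ℂ) := by
  simp only [Matrix.trace, Matrix.diag, Matrix.mul_apply, Matrix.diagonal_apply,
    Matrix.conjTranspose_apply, Function.comp_apply, RCLike.ofReal_alg, ite_mul, zero_mul,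
    mul_ite, mul_zero, Finset.sum_ite_eq, Finset.sum_ite_eq', Finset.mem_univ, if_true]
  refine Finset.sum_congr rfl fun i _ => Finset.sum_congr rfl fun j _ => ?_
  rw [Complex.real_smul, Complex.real_smul, mul_one, mul_one, Complex.star_def]
  push_cast
  rw [← Complex.mul_conj]
  ring

/-- For positive semidefinite Hermitian matrices `X`, `Y` with decreasing eigenvalue
sequences `x`, `y`, one has `trace (X * Y) ≤ ∑ x i * y i`. -/
theorem trace_mul_le_sum_eigenvalues (n : ℕ) (X Y : Matrix (Fin n) (Fin n) ℂ)
    (hX : X.PosSemidef) (hY : Y.PosSemidef)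
    (x y : Fin n → ℝ) (hx : Antitone x) (hy : Antitone y)
    (hxs : ∃ σ : Equiv.Perm (Fin n), x = hX.1.eigenvalues ∘ σ)
    (hys : ∃ σ : Equiv.Perm (Fin n), y = hY.1.eigenvalues ∘ σ) :
    (Matrix.trace (X * Y)).re ≤ ∑ i : Fin n, x i * y i := by
  obtain ⟨σ, hσ⟩ := hxs
  obtain ⟨τ, hτ⟩ := hys
  set a := hX.1.eigenvalues with ha
  set b := hY.1.eigenvalues with hb
  set u : Matrix (Fin n) (Fin n) ℂ := ↑(hX.1.eigenvectorUnitary) with hu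
  set v : Matrix (Fin n) (Fin n) ℂ := ↑(hY.1.eigenvectorUnitary) with hv
  have hu1 : u * star u = 1 := Matrix.mem_unitaryGroup_iff.mp (hX.1.eigenvectorUnitary).2
  have hu2 : star u * u = 1 := Matrix.mem_unitaryGroup_iff'.mp (hX.1.eigenvectorUnitary).2
  have hv1 : v * star v = 1 := Matrix.mem_unitaryGroup_iff.mp (hY.1.eigenvectorUnitary).2
  have hv2 : star v * v = 1 := Matrix.mem_unitaryGroup_iff'.mp (hY.1.eigenvectorUnitary).2
  set W : Matrix (Fin n) (Fin n) ℂ := star u * v with hW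
  have hW1 : W * Wᴴ = 1 := by
    rw [← Matrix.star_eq_conjTranspose, hW, Matrix.star_mul, star_star, mul_assoc,
      ← mul_assoc v, hv1, one_mul, hu2]
  have hW2 : Wᴴ * W = 1 := by
    rw [← Matrix.star_eq_conjTranspose, hW, Matrix.star_mul, star_star, mul_assoc,
      ← mul_assoc u, hu1, one_mul, hv2]
  -- reduce the trace
  have key : u * diagonal (RCLike.ofReal ∘ a) * star u * (v * diagonal (RCLike.ofReal ∘ b) * star v)
      = u * (diagonal (RCLike.ofReal ∘ a) * W * diagonal (RCLike.ofReal ∘ b) * Wᴴ) * star u := by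
    rw [hW, ← Matrix.star_eq_conjTranspose, Matrix.star_mul, star_star]
    simp only [Matrix.mul_assoc]
    rw [hu1, Matrix.mul_one]
  have htr : Matrix.trace (X * Y)
      = ∑ i, ∑ j, ((a i * b j * Complex.normSq (W i j) : ℝ) : ℂ) := by
    conv_lhs => rw [hX.1.spectral_theorem, hY.1.spectral_theorem, Unitary.conjStarAlgAut_apply,
      Unitary.conjStarAlgAut_apply]
    rw [← hu, ← hv, ← ha, ← hb, key, Matrix.trace_mul_cycle, ← mul_assoc, hu2, one_mul,
      aux_trace_eq]
  have hre : (Matrix.trace (X * Y)).re = ∑ i, ∑ j, a i * b j * Complex.normSq (W i j) := by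
    rw [htr]
    simp [Complex.re_sum]
  -- the doubly stochastic matrix
  set P : Matrix (Fin n) (Fin n) ℝ := fun i j => Complex.normSq (W i j) with hP
  set Q : Matrix (Fin n) (Fin n) ℝ := fun i j => P (σ i) (τ j) with hQ
  have hProw : ∀ i, ∑ j, P i j = 1 := by
    intro i
    have h := congrFun (congrFun hW1 i) i
    rw [Matrix.mul_apply, Matrix.one_apply_eq] at h
    simp only [Matrix.conjTranspose_apply, Complex.star_def, Complex.mul_conj] at h
    exact_mod_cast h
  have hPcol : ∀ j, ∑ i, P i j = 1 := by
    intro j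
    have h := congrFun (congrFun hW2 j) j
    rw [Matrix.mul_apply, Matrix.one_apply_eq] at h
    simp only [Matrix.conjTranspose_apply, Complex.star_def, ← Complex.normSq_eq_conj_mul_self] at h
    exact_mod_cast h
  have hQds : Q ∈ doublyStochastic ℝ (Fin n) := by
    rw [mem_doublyStochastic_iff_sum]
    refine ⟨fun i j => Complex.normSq_nonneg _, fun i => ?_, fun j => ?_⟩
    · rw [show ∑ j, Q i j = ∑ j, P (σ i) (τ j) from rfl, Equiv.sum_comp τ (fun j => P (σ i) j)]
      exact hProw _
    · rw [show ∑ i, Q i j = ∑ i, P (σ i) (τ j) from rfl, Equiv.sum_comp σ (fun i => P i (τ j))]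
      exact hPcol _
  have hsum : ∑ i, ∑ j, a i * b j * P i j = ∑ i, ∑ j, x i * y j * Q i j := by
    rw [← Equiv.sum_comp σ (fun i => ∑ j, a i * b j * P i j)]
    refine Finset.sum_congr rfl fun i _ => ?_
    rw [← Equiv.sum_comp τ (fun j => a (σ i) * b j * P (σ i) j)]
    refine Finset.sum_congr rfl fun j _ => ?_
    rw [hσ, hτ]
    rfl
  rw [hre, hsum]
  exact aux_ds_le x y hx hy hQds
end

section
/- Let {x^{(k)}} and {y^{(k)}} be sequences (indexed by k ∈ ℕ) of summable decreasing nonnegative sequences such that x^{(k)} is weakly sub-majorized by y^{(k)} for every k. If the pointwise sums X_n = ∑_k x^{(k)}_n and Y_n = ∑_k y^{(k)}_n are finite and summable, and each y^{(k)} is decreasing, then the decreasing rearrangement of X is weakly sub-majorized by Y. -/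
/-- A strictly monotone map `Fin n → ℕ` satisfies `j ≤ g j`. -/
lemma fin_strictMono_le {n : ℕ} {g : Fin n → ℕ} (hg : StrictMono g) (j : Fin n) :
    (j : ℕ) ≤ g j := by
  obtain ⟨m, hm⟩ := j
  revert hm
  induction m with
  | zero => exact fun _ => Nat.zero_le _
  | succ i ih =>
    intro hm
    have hi : i < n := Nat.lt_of_succ_lt hm
    have h2 : g ⟨i, hi⟩ < g ⟨i + 1, hm⟩ := hg (by simp [Fin.lt_def])
    have h1 := ih hi
    simpa using Nat.lt_of_le_of_lt h1 h2

/-- Sum of an antitone sequence over a finset is at most the sum over the first `card` terms. -/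
lemma sum_le_sum_range_card (f : ℕ → NNReal) (hf : Antitone f) (s : Finset ℕ) :
    ∑ i ∈ s, f i ≤ ∑ i ∈ Finset.range s.card, f i := by
  have h : ∑ i ∈ s, f i = ∑ j : Fin s.card, f (s.orderEmbOfFin rfl j) := by
    rw [← Finset.sum_coe_sort s f]
    exact (Fintype.sum_equiv (s.orderIsoOfFin rfl).toEquiv
      (fun j => f (s.orderEmbOfFin rfl j)) (fun a => f a)
      (fun j => by simp [Finset.coe_orderIsoOfFin_apply])).symm
  rw [h, Finset.sum_range fun j => f j]
  exact Finset.sum_le_sum fun j _ =>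
    hf (fin_strictMono_le (s.orderEmbOfFin rfl).strictMono j)

/-- If `x k` is weakly sub-majorized by the decreasing sequence `y k` for every `k`, then
the pointwise sum `X i = ∑' k, x k i` is weakly sub-majorized by `Y i = ∑' k, y k i`:
for every finite set `s` of indices, `∑_{i ∈ s} X i ≤ ∑_{i < s.card} Y i`
(the left-hand supremum over such `s` gives the partial sums of the decreasing
rearrangement of `X`). -/
theorem submajorization_of_sums (x y : ℕ → ℕ → NNReal)
    (hxa : ∀ k, Antitone (x k)) (hya : ∀ k, Antitone (y k))
    (hxs : ∀ k, Summable (x k)) (hys : ∀ k, Summable (y k))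
    (hmaj : ∀ k n, ∑ i ∈ Finset.range (n + 1), x k i ≤ ∑ i ∈ Finset.range (n + 1), y k i)
    (hXfin : ∀ i, Summable fun k => x k i) (hYfin : ∀ i, Summable fun k => y k i)
    (hXsum : Summable fun i => ∑' k, x k i) (hYsum : Summable fun i => ∑' k, y k i) :
    ∀ s : Finset ℕ, ∑ i ∈ s, (∑' k, x k i) ≤ ∑ i ∈ Finset.range s.card, (∑' k, y k i) := by
  intro s
  rw [← Summable.tsum_finsetSum fun i _ => hXfin i, ← Summable.tsum_finsetSum fun i _ => hYfin i]
  refine Summable.tsum_le_tsum (fun k => ?_) (summable_sum fun i _ => hXfin i)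
    (summable_sum fun i _ => hYfin i)
  calc ∑ i ∈ s, x k i ≤ ∑ i ∈ Finset.range s.card, x k i :=
        sum_le_sum_range_card (x k) (hxa k) s
    _ ≤ ∑ i ∈ Finset.range s.card, y k i := by
        rcases Nat.eq_zero_or_pos s.card with h | h
        · simp [h]
        · obtain ⟨n, hn⟩ := Nat.exists_eq_succ_of_ne_zero (Nat.pos_iff_ne_zero.mp h)
          rw [hn]
          exact hmaj k n
end

section
/- Let p : ℕ → ℝ≥0 be decreasing (p_0 ≥ p_1 ≥ …) and summable, and let 0 ≤ λ ≤ 1. Then the thinned sequence T_λ(p), with T_λ(p)_n = ∑_{k≥n} C(k,n)λⁿ(1−λ)^{k−n} p_k, is also decreasing. -/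
open scoped NNReal ENNReal

private noncomputable def thinc (L Q : ℝ≥0∞) (n m : ℕ) : ℝ≥0∞ :=
  (Nat.choose m n : ℝ≥0∞) * L ^ n * Q ^ (m - n)

private noncomputable def thinB (L Q : ℝ≥0∞) (n m : ℕ) : ℝ≥0∞ :=
  (Nat.choose (m + 1) (n + 1) : ℝ≥0∞) * L ^ n * Q ^ (m - n)

private lemma split_one {L Q : ℝ≥0∞} (h : L + Q = 1) (x : ℝ≥0∞) :
    x = x * L + x * Q := by rw [← mul_add, h, mul_one]

private lemma thin_pmf_le_one {L Q : ℝ≥0∞} (h : L + Q = 1) (k j : ℕ) :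
    (Nat.choose k j : ℝ≥0∞) * L ^ j * Q ^ (k - j) ≤ 1 := by
  rcases le_or_gt j k with hjk | hjk
  · have hb : (L + Q) ^ k = ∑ i ∈ Finset.range (k + 1),
        L ^ i * Q ^ (k - i) * (Nat.choose k i : ℝ≥0∞) := add_pow L Q k
    have hmem : j ∈ Finset.range (k + 1) := Finset.mem_range.2 (by omega)
    calc (Nat.choose k j : ℝ≥0∞) * L ^ j * Q ^ (k - j)
        = L ^ j * Q ^ (k - j) * (Nat.choose k j : ℝ≥0∞) := by ring
      _ ≤ ∑ i ∈ Finset.range (k + 1), L ^ i * Q ^ (k - i) * (Nat.choose k i : ℝ≥0∞) :=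
          Finset.single_le_sum (f := fun i => L ^ i * Q ^ (k - i) * (Nat.choose k i : ℝ≥0∞))
            (fun i _ => zero_le) hmem
      _ = (L + Q) ^ k := hb.symm
      _ = 1 := by rw [h, one_pow]
  · simp [Nat.choose_eq_zero_of_lt hjk]

private lemma thin_key0 (L Q : ℝ≥0∞) (n : ℕ) :
    thinc L Q n 0 = thinc L Q (n + 1) 0 + thinB L Q n 0 := by
  cases n with
  | zero => simp [thinc, thinB]
  | succ k => simp [thinc, thinB, Nat.choose]

private lemma thin_keyS {L Q : ℝ≥0∞} (h : L + Q = 1) (n m : ℕ) :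
    thinc L Q n (m + 1) + thinB L Q n m
      = thinc L Q (n + 1) (m + 1) + thinB L Q n (m + 1) := by
  unfold thinc thinB
  rcases Nat.lt_or_ge m n with hmn | hmn
  · rcases Nat.lt_or_ge (m + 1) n with h2 | h2
    · simp [Nat.choose_eq_zero_of_lt, h2, hmn,
        Nat.choose_eq_zero_of_lt (show m + 1 < n + 1 by omega),
        Nat.choose_eq_zero_of_lt (show m + 2 < n + 1 by omega)]
    · have hn : n = m + 1 := by omega
      subst hn
      simp [Nat.choose_self, Nat.choose_eq_zero_of_lt (show m + 1 < m + 2 by omega),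
        Nat.sub_self, Nat.succ_sub_succ]
  · obtain ⟨d, rfl⟩ := Nat.exists_eq_add_of_le hmn
    simp only [show n + d + 1 - n = d + 1 from by omega,
      show n + d - n = d from by omega,
      show n + d + 1 - (n + 1) = d from by omega,
      Nat.choose_succ_succ (n + d + 1) n]
    push_cast
    rw [split_one h ((Nat.choose (n + d + 1) (n + 1) : ℝ≥0∞) * L ^ n * Q ^ d)]
    ring

private lemma thin_step {L Q : ℝ≥0∞} (h : L + Q = 1) (hL : L ≠ 0)
    (P : ℕ → ℝ≥0∞) (hPanti : Antitone P) (hPsum : ∑' m, P m ≠ ∞) (n : ℕ) :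
    ∑' m, thinc L Q (n + 1) m * P m ≤ ∑' m, thinc L Q n m * P m := by
  have hLtop : L ≠ ∞ :=
    ne_top_of_le_ne_top ENNReal.one_ne_top (le_trans le_self_add h.le)
  set Y := ∑' m, thinB L Q n m * P m with hYdef
  set X := ∑' m, thinB L Q n m * P (m + 1) with hXdef
  -- Y is finite
  have hBle : ∀ m, thinB L Q n m ≤ L⁻¹ := by
    intro m
    have hpmf := thin_pmf_le_one h (m + 1) (n + 1)
    rw [Nat.succ_sub_succ] at hpmf
    rw [ENNReal.le_inv_iff_mul_le]
    calc thinB L Q n m * L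
        = (Nat.choose (m + 1) (n + 1) : ℝ≥0∞) * L ^ (n + 1) * Q ^ (m - n) := by
          unfold thinB; ring
      _ ≤ 1 := hpmf
  have hY : Y ≠ ∞ := by
    have : Y ≤ L⁻¹ * ∑' m, P m := by
      rw [← ENNReal.tsum_mul_left]
      exact ENNReal.tsum_le_tsum fun m => mul_le_mul_left (hBle m) _
    exact ne_top_of_le_ne_top (ENNReal.mul_ne_top (ENNReal.inv_ne_top.2 hL) hPsum) this
  have hXY : X ≤ Y :=
    ENNReal.tsum_le_tsum fun m => mul_le_mul_right (hPanti (Nat.le_succ m)) _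
  have hX : X ≠ ∞ := ne_top_of_le_ne_top hY hXY
  -- the main identity
  have hmain : (∑' m, thinc L Q n m * P m) + X = (∑' m, thinc L Q (n + 1) m * P m) + Y := by
    set k : ℕ → ℝ≥0∞ := fun m => if m = 0 then 0 else thinB L Q n (m - 1) * P m with hk
    have hXk : X = ∑' m, k m := by
      rw [tsum_eq_zero_add' ENNReal.summable]
      simp [hk, hXdef]
    calc (∑' m, thinc L Q n m * P m) + X
        = ∑' m, (thinc L Q n m * P m + k m) := by
          rw [hXk, ENNReal.tsum_add]
      _ = ∑' m, (thinc L Q (n + 1) m + thinB L Q n m) * P m := by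
          congr 1; funext m
          cases m with
          | zero => simp [hk, thin_key0 L Q n, add_mul]
          | succ m =>
              simp only [hk, if_neg (Nat.succ_ne_zero m), Nat.add_sub_cancel, add_mul,
                ← thin_keyS h n m]
      _ = (∑' m, thinc L Q (n + 1) m * P m) + Y := by
          simp only [add_mul]
          rw [ENNReal.tsum_add]
  have : (∑' m, thinc L Q (n + 1) m * P m) + X ≤ (∑' m, thinc L Q n m * P m) + X := by
    calc (∑' m, thinc L Q (n + 1) m * P m) + X
        ≤ (∑' m, thinc L Q (n + 1) m * P m) + Y := add_le_add_right hXY _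
      _ = (∑' m, thinc L Q n m * P m) + X := hmain.symm
  exact (ENNReal.add_le_add_iff_right hX).1 this

/-- The thinning of a decreasing summable nonnegative sequence is decreasing
(passive-preserving property of the thinning channel). -/
theorem thinning_antitone (p : ℕ → NNReal) (hp : Summable p) (hmono : Antitone p)
    (lam : NNReal) (hlam : lam ≤ 1) :
    Antitone (fun n => ∑' k, (Nat.choose k n : NNReal) * lam ^ n * (1 - lam) ^ (k - n) * p k) := by
  apply antitone_nat_of_succ_le
  intro n
  by_cases h0 : lam = 0
  · subst h0
    have h1 : ∑' k, (Nat.choose k (n+1) : NNReal) * (0:NNReal) ^ (n+1) * (1 - 0) ^ (k - (n+1)) * p k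
        = 0 := by
      simp [pow_succ]
    exact h1.trans_le zero_le
  · set L : ℝ≥0∞ := (lam : ℝ≥0∞) with hLdef
    set Q : ℝ≥0∞ := ((1 - lam : ℝ≥0) : ℝ≥0∞) with hQdef
    have hLQ : L + Q = 1 := by
      rw [hLdef, hQdef, ← ENNReal.coe_add, add_tsub_cancel_of_le hlam, ENNReal.coe_one]
    have hLne : L ≠ 0 := by
      simpa [hLdef] using h0
    set P : ℕ → ℝ≥0∞ := fun m => (p m : ℝ≥0∞) with hPdef
    have hPanti : Antitone P := fun a b hab => ENNReal.coe_le_coe.2 (hmono hab)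
    have hPsum : ∑' m, P m ≠ ∞ := by
      rw [hPdef, ← ENNReal.coe_tsum hp]
      exact ENNReal.coe_ne_top
    have hcoe : ∀ (j k : ℕ),
        (((Nat.choose k j : NNReal) * lam ^ j * (1 - lam) ^ (k - j) * p k : ℝ≥0) : ℝ≥0∞)
          = thinc L Q j k * P k := by
      intro j k
      unfold thinc
      push_cast
      rfl
    have hfin : ∀ j, (∑' k, thinc L Q j k * P k) ≠ ∞ := by
      intro j
      have hle : (∑' k, thinc L Q j k * P k) ≤ ∑' k, P k := by
        refine ENNReal.tsum_le_tsum fun k => ?_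
        calc thinc L Q j k * P k ≤ 1 * P k :=
              mul_le_mul_left (thin_pmf_le_one hLQ k j) _
          _ = P k := one_mul _
      exact ne_top_of_le_ne_top hPsum hle
    have hsum : ∀ j, Summable
        (fun k => (Nat.choose k j : NNReal) * lam ^ j * (1 - lam) ^ (k - j) * p k) := by
      intro j
      rw [← ENNReal.tsum_coe_ne_top_iff_summable]
      simpa only [hcoe] using hfin j
    have key := thin_step hLQ hLne P hPanti hPsum n
    rw [← ENNReal.coe_le_coe, ENNReal.coe_tsum (hsum (n + 1)), ENNReal.coe_tsum (hsum n)]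
    simpa only [hcoe] using key
end

section
/- Let x : ℕ → ℝ≥0 be summable, let x↓ be its decreasing rearrangement, and let 0 ≤ λ ≤ 1. Then T_λ(x) is majorized by T_λ(x↓): for every n, ∑_{i=0}^n (T_λ(x))↓_i ≤ ∑_{i=0}^n T_λ(x↓)_i, with equality of total sums. -/
open Finset
open scoped ENNReal NNReal

namespace ThinFock

variable {lam : NNReal}

/-- The binomial kernel. -/
noncomputable def c (lam : NNReal) (i k : ℕ) : NNReal :=
  (Nat.choose k i : NNReal) * lam ^ i * (1 - lam) ^ (k - i)

lemma hmu (hlam : lam ≤ 1) : (1 - lam) + lam = 1 := tsub_add_cancel_of_le hlam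

lemma c_eq_zero {i k : ℕ} (h : k < i) : c lam i k = 0 := by
  simp [c, Nat.choose_eq_zero_of_lt h]

lemma sum_c (hlam : lam ≤ 1) (k : ℕ) : ∑ i ∈ range (k + 1), c lam i k = 1 := by
  have h := add_pow lam (1 - lam) k
  rw [add_comm, hmu hlam, one_pow] at h
  rw [show (1 : NNReal) = ∑ m ∈ range (k+1), lam ^ m * (1-lam) ^ (k-m) * (Nat.choose k m : NNReal) from h]
  apply Finset.sum_congr rfl
  intro i _
  simp only [c]; ring

lemma c_le_one (hlam : lam ≤ 1) (i k : ℕ) : c lam i k ≤ 1 := by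
  rcases lt_or_ge k i with h | h
  · simp [c_eq_zero h]
  · calc c lam i k ≤ ∑ j ∈ range (k + 1), c lam j k :=
        Finset.single_le_sum (f := fun j => c lam j k) (fun j _ => zero_le)
          (mem_range.2 (Nat.lt_succ_of_le h))
    _ = 1 := sum_c hlam k

lemma sum_c_le_one (hlam : lam ≤ 1) (s : Finset ℕ) (k : ℕ) :
    ∑ i ∈ s, c lam i k ≤ 1 := by
  calc ∑ i ∈ s, c lam i k = ∑ i ∈ s.filter (· < k + 1), c lam i k := by
        rw [Finset.sum_filter_of_ne]
        intro i _ h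
        by_contra hc
        exact h (c_eq_zero (by omega))
    _ ≤ ∑ i ∈ range (k + 1), c lam i k := by
        apply Finset.sum_le_sum_of_subset
        intro i hi
        simp only [mem_filter] at hi
        exact mem_range.2 hi.2
    _ = 1 := sum_c hlam k

lemma c_succ_succ (i k : ℕ) :
    c lam (i+1) (k+1) = (1 - lam) * c lam (i+1) k + lam * c lam i k := by
  have hT2 : (Nat.choose k i : NNReal) * lam ^ (i+1) * (1-lam) ^ (k-i) = lam * c lam i k := by
    simp only [c, pow_succ]; ring
  have hT1 : (Nat.choose k (i+1) : NNReal) * lam ^ (i+1) * (1-lam) ^ (k-i)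
      = (1 - lam) * c lam (i+1) k := by
    rcases lt_or_ge k (i+1) with h | h
    · rw [c_eq_zero h, Nat.choose_eq_zero_of_lt h]; simp
    · have e1 : k - i = (k - (i+1)) + 1 := by omega
      rw [c, e1, pow_succ]
      ring
  have : c lam (i+1) (k+1)
      = (Nat.choose k (i+1) : NNReal) * lam ^ (i+1) * (1-lam) ^ (k-i)
        + (Nat.choose k i : NNReal) * lam ^ (i+1) * (1-lam) ^ (k-i) := by
    rw [c, Nat.choose_succ_succ' k i, Nat.succ_sub_succ]
    push_cast
    ring
  rw [this, hT1, hT2]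

/-- Antitonicity (in `k`) of `v n k = ∑_{i<n} c i k`. -/
lemma v_anti (hlam : lam ≤ 1) (n : ℕ) : Antitone (fun k => ∑ i ∈ range n, c lam i k) := by
  apply antitone_nat_of_succ_le
  intro k
  show ∑ i ∈ range n, c lam i (k+1) ≤ ∑ i ∈ range n, c lam i k
  rcases Nat.eq_zero_or_pos n with rfl | hn
  · simp
  obtain ⟨n', rfl⟩ : ∃ n', n = n' + 1 := ⟨n - 1, by omega⟩
  have h0 : c lam 0 (k+1) = (1 - lam) * c lam 0 k := by
    simp only [c, Nat.zero_sub, Nat.sub_zero, pow_succ]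
    simp [pow_succ]; ring
  have key : ∑ i ∈ range (n' + 1), c lam i (k + 1)
      = (1 - lam) * ∑ i ∈ range (n' + 1), c lam i k + lam * ∑ i ∈ range n', c lam i k := by
    rw [Finset.sum_range_succ' (fun i => c lam i (k+1)) n',
        Finset.sum_range_succ' (fun i => c lam i k) n']
    calc ∑ i ∈ range n', c lam (i+1) (k+1) + c lam 0 (k+1)
        = ∑ i ∈ range n', ((1 - lam) * c lam (i+1) k + lam * c lam i k)
            + (1-lam) * c lam 0 k := by
          rw [h0]
          congr 1
          exact Finset.sum_congr rfl fun i _ => c_succ_succ i k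
      _ = (1 - lam) * (∑ i ∈ range n', c lam (i+1) k + c lam 0 k)
            + lam * ∑ i ∈ range n', c lam i k := by
          rw [Finset.sum_add_distrib, mul_add, Finset.mul_sum, Finset.mul_sum]
          ring
  rw [key]
  calc (1 - lam) * ∑ i ∈ range (n' + 1), c lam i k + lam * ∑ i ∈ range n', c lam i k
      ≤ (1 - lam) * ∑ i ∈ range (n' + 1), c lam i k + lam * ∑ i ∈ range (n'+1), c lam i k := by
        exact add_le_add_right (mul_le_mul_right
          (Finset.sum_le_sum_of_subset (Finset.range_subset_range.2 (Nat.le_succ n'))) lam) _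
    _ = ∑ i ∈ range (n' + 1), c lam i k := by rw [← add_mul, hmu hlam, one_mul]


/-- Splitting a sum over the powerset of a disjoint union. -/
lemma split : ∀ (v u : Finset ℕ) (F : Finset ℕ → Finset ℕ → NNReal), Disjoint u v →
      ∑ A ∈ (u ∪ v).powerset, F (A ∩ u) (A \ u)
        = ∑ B ∈ u.powerset, ∑ C ∈ v.powerset, F B C := by
  intro v
  induction v using Finset.induction_on with
  | empty =>
      intro u F _
      simp only [Finset.union_empty, Finset.powerset_empty, Finset.sum_singleton]
      apply Finset.sum_congr rfl
      intro A hA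
      rw [Finset.mem_powerset] at hA
      rw [Finset.inter_eq_left.2 hA, Finset.sdiff_eq_empty_iff_subset.2 hA]
  | @insert a v hav ih =>
      intro u F hdisj
      have hau : a ∉ u := (Finset.disjoint_insert_right.1 hdisj).1
      have hdisj' : Disjoint u v := (Finset.disjoint_insert_right.1 hdisj).2
      have havu : a ∉ u ∪ v := by simp [hau, hav]
      rw [Finset.union_insert, Finset.sum_powerset_insert havu]
      rw [ih u F hdisj']
      have : ∑ A ∈ (u ∪ v).powerset, F ((insert a A) ∩ u) ((insert a A) \ u)
          = ∑ B ∈ u.powerset, ∑ C ∈ v.powerset, F B (insert a C) := by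
        rw [show (fun A => F ((insert a A) ∩ u) ((insert a A) \ u))
            = fun A => (fun B C => F B (insert a C)) (A ∩ u) (A \ u) from ?_]
        · exact ih u (fun B C => F B (insert a C)) hdisj'
        · funext A
          rw [Finset.insert_inter_of_notMem hau, Finset.insert_sdiff_of_notMem A hau]
      rw [this, ← Finset.sum_add_distrib]
      apply Finset.sum_congr rfl
      intro B _
      rw [← Finset.sum_powerset_insert hav]

/-- A sum over the powerset of a function of the cardinality. -/
lemma sum_powerset_card (u : Finset ℕ) (G : ℕ → NNReal) :
    ∑ B ∈ u.powerset, G B.card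
      = ∑ j ∈ range (u.card + 1), (u.card.choose j : NNReal) * G j := by
  have hmaps : ∀ B ∈ u.powerset, B.card ∈ range (u.card + 1) := by
    intro B hB
    rw [Finset.mem_powerset] at hB
    exact mem_range.2 (Nat.lt_succ_of_le (Finset.card_le_card hB))
  rw [← Finset.sum_fiberwise_of_maps_to hmaps (fun B => G B.card)]
  apply Finset.sum_congr rfl
  intro j _
  have h1 : Finset.filter (fun B => B.card = j) u.powerset = u.powersetCard j :=
    (Finset.powersetCard_eq_filter).symm
  rw [h1]
  have h2 : ∀ B ∈ u.powersetCard j, G B.card = G j := by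
    intro B hB
    rw [(Finset.mem_powersetCard.1 hB).2]
  rw [Finset.sum_congr rfl h2, Finset.sum_const, Finset.card_powersetCard, nsmul_eq_mul]

lemma sum_powerset_congr {u u' : Finset ℕ} (h : u.card = u'.card) (G : ℕ → NNReal) :
    ∑ B ∈ u.powerset, G B.card = ∑ B ∈ u'.powerset, G B.card := by
  rw [sum_powerset_card, sum_powerset_card, h]

noncomputable def wt (lam : NNReal) (M : ℕ) (A : Finset ℕ) : NNReal :=
  lam ^ A.card * (1 - lam) ^ (M - A.card)

/-- Marginal identity. -/
lemma I1 (hlam : lam ≤ 1) (i : ℕ) :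
    ∀ M k, k < M →
    ∑ A ∈ (range M).powerset,
        wt lam M A * (if k ∈ A ∧ (A ∩ range k).card = i then 1 else 0)
      = lam * c lam i k := by
  have base : ∀ k, ∑ A ∈ (range (k+1)).powerset,
      wt lam (k+1) A * (if k ∈ A ∧ (A ∩ range k).card = i then 1 else 0)
      = lam * c lam i k := by
    intro k
    rw [Finset.range_add_one, Finset.sum_powerset_insert (Finset.notMem_range_self)]
    have e1 : ∑ A ∈ (range k).powerset,
        wt lam (k+1) A * (if k ∈ A ∧ (A ∩ range k).card = i then 1 else 0) = 0 := by
      apply Finset.sum_eq_zero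
      intro A hA
      rw [Finset.mem_powerset] at hA
      have : k ∉ A := fun h => Finset.notMem_range_self (hA h)
      simp [this]
    rw [e1, zero_add]
    have e2 : ∀ A ∈ (range k).powerset,
        wt lam (k+1) (insert k A) * (if k ∈ insert k A ∧ ((insert k A) ∩ range k).card = i then 1 else 0)
        = (lam * (lam ^ A.card * (1 - lam) ^ (k - A.card))) * (if A.card = i then 1 else 0) := by
      intro A hA
      rw [Finset.mem_powerset] at hA
      have hkA : k ∉ A := fun h => Finset.notMem_range_self (hA h)
      have h1 : (insert k A) ∩ range k = A := by
        rw [Finset.insert_inter_of_notMem Finset.notMem_range_self,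
            Finset.inter_eq_left.2 hA]
      have h2 : (insert k A).card = A.card + 1 := Finset.card_insert_of_notMem hkA
      have h3 : A.card ≤ k := le_trans (Finset.card_le_card hA) (by rw [Finset.card_range])
      rw [h1]
      simp only [Finset.mem_insert, true_or, true_and, wt, h2]
      have h4 : k + 1 - (A.card + 1) = k - A.card := by omega
      rw [h4, pow_succ]
      ring_nf
    rw [Finset.sum_congr rfl e2]
    rcases le_or_gt i k with hik | hik
    · have : ∑ A ∈ (range k).powerset,
          (lam * (lam ^ A.card * (1 - lam) ^ (k - A.card))) * (if A.card = i then 1 else 0)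
          = ∑ A ∈ (range k).powersetCard i, lam * (lam ^ i * (1-lam) ^ (k-i)) := by
        rw [Finset.powersetCard_eq_filter, Finset.sum_filter]
        apply Finset.sum_congr rfl
        intro A _
        by_cases h : A.card = i
        · simp [h]
        · simp [h]
      rw [this, Finset.sum_const, Finset.card_powersetCard, Finset.card_range, nsmul_eq_mul, c]
      ring
    · have : ∑ A ∈ (range k).powerset,
          (lam * (lam ^ A.card * (1 - lam) ^ (k - A.card))) * (if A.card = i then 1 else 0) = 0 := by
        apply Finset.sum_eq_zero
        intro A hA
        rw [Finset.mem_powerset] at hA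
        have : A.card ≠ i := by
          have := Finset.card_le_card hA
          rw [Finset.card_range] at this
          omega
        simp [this]
      rw [this, c, Nat.choose_eq_zero_of_lt hik]
      simp
  intro M
  induction M with
  | zero => intro k hk; omega
  | succ M ih =>
      intro k hk
      rcases Nat.lt_succ_iff_lt_or_eq.1 hk with hkM | rfl
      · -- step case: k < M
        rw [Finset.range_add_one, Finset.sum_powerset_insert (Finset.notMem_range_self)]
        have hMk : M ∉ range k := fun h => by
          have := mem_range.1 h; omega
        have e1 : ∀ A ∈ (range M).powerset,
            wt lam (M+1) A * (if k ∈ A ∧ (A ∩ range k).card = i then 1 else 0)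
            = (1 - lam) * (wt lam M A * (if k ∈ A ∧ (A ∩ range k).card = i then 1 else 0)) := by
          intro A hA
          rw [Finset.mem_powerset] at hA
          have h3 : A.card ≤ M := le_trans (Finset.card_le_card hA) (by rw [Finset.card_range])
          have h4 : M + 1 - A.card = (M - A.card) + 1 := by omega
          rw [wt, wt, h4, pow_succ]
          ring
        have e2 : ∀ A ∈ (range M).powerset,
            wt lam (M+1) (insert M A) * (if k ∈ insert M A ∧ ((insert M A) ∩ range k).card = i then 1 else 0)
            = lam * (wt lam M A * (if k ∈ A ∧ (A ∩ range k).card = i then 1 else 0)) := by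
          intro A hA
          rw [Finset.mem_powerset] at hA
          have hMA : M ∉ A := fun h => Finset.notMem_range_self (hA h)
          have h3 : A.card ≤ M := le_trans (Finset.card_le_card hA) (by rw [Finset.card_range])
          have h1 : (insert M A) ∩ range k = A ∩ range k := by
            rw [Finset.insert_inter_of_notMem hMk]
          have h2 : k ∈ insert M A ↔ k ∈ A := by
            simp only [Finset.mem_insert]
            constructor
            · rintro (rfl | h)
              · omega
              · exact h
            · exact Or.inr
          rw [h1, wt, Finset.card_insert_of_notMem hMA]
          have h4 : M + 1 - (A.card + 1) = M - A.card := by omega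
          rw [h4, pow_succ]
          have : (if k ∈ insert M A ∧ (A ∩ range k).card = i then (1:NNReal) else 0)
              = (if k ∈ A ∧ (A ∩ range k).card = i then 1 else 0) := by
            simp only [h2]
          rw [this, wt]
          ring
        rw [Finset.sum_congr rfl e1, Finset.sum_congr rfl e2,
            ← Finset.mul_sum, ← Finset.mul_sum, ih k hkM]
        calc (1-lam) * (lam * c lam i k) + lam * (lam * c lam i k)
            = ((1-lam) + lam) * (lam * c lam i k) := by ring
          _ = lam * c lam i k := by rw [hmu hlam, one_mul]
      · exact base k
lemma stepA (hlam : lam ≤ 1) (M : ℕ) (t s : Finset ℕ) (ht : ∀ k ∈ t, k < M) :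
    lam * ∑ k ∈ t, ∑ i ∈ s, c lam i k
      = ∑ A ∈ (range M).powerset,
          wt lam M A * ∑ k ∈ t, (if k ∈ A ∧ (A ∩ range k).card ∈ s then 1 else 0) := by
  have e0 : ∀ A : Finset ℕ, ∀ k,
      (∑ i ∈ s, if k ∈ A ∧ (A ∩ range k).card = i then (1:NNReal) else 0)
        = (if k ∈ A ∧ (A ∩ range k).card ∈ s then 1 else 0) := by
    intro A k
    by_cases hk : k ∈ A
    · simp only [hk, true_and]
      exact Finset.sum_ite_eq s ((A ∩ range k).card) (fun _ => 1)
    · simp [hk]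
  calc lam * ∑ k ∈ t, ∑ i ∈ s, c lam i k
      = ∑ k ∈ t, ∑ i ∈ s, lam * c lam i k := by
        rw [Finset.mul_sum]
        exact Finset.sum_congr rfl fun k _ => Finset.mul_sum _ _ _
    _ = ∑ k ∈ t, ∑ i ∈ s, ∑ A ∈ (range M).powerset,
          wt lam M A * (if k ∈ A ∧ (A ∩ range k).card = i then 1 else 0) := by
        exact Finset.sum_congr rfl fun k hk => Finset.sum_congr rfl fun i _ =>
          (I1 hlam i M k (ht k hk)).symm
    _ = ∑ k ∈ t, ∑ A ∈ (range M).powerset, ∑ i ∈ s,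
          wt lam M A * (if k ∈ A ∧ (A ∩ range k).card = i then 1 else 0) :=
        Finset.sum_congr rfl fun k _ => Finset.sum_comm
    _ = ∑ A ∈ (range M).powerset, ∑ k ∈ t, ∑ i ∈ s,
          wt lam M A * (if k ∈ A ∧ (A ∩ range k).card = i then 1 else 0) :=
        Finset.sum_comm
    _ = ∑ A ∈ (range M).powerset,
          wt lam M A * ∑ k ∈ t, (if k ∈ A ∧ (A ∩ range k).card ∈ s then 1 else 0) := by
        apply Finset.sum_congr rfl
        intro A _
        rw [Finset.mul_sum]
        apply Finset.sum_congr rfl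
        intro k _
        rw [← Finset.mul_sum, e0]

lemma C1 (A t s : Finset ℕ) :
    (∑ k ∈ t, if k ∈ A ∧ (A ∩ range k).card ∈ s then (1:NNReal) else 0)
      ≤ ((min s.card (A ∩ t).card : ℕ) : NNReal) := by
  rw [Finset.sum_boole]
  have hmono : ∀ k₁ k₂ : ℕ, k₁ ∈ A → k₁ < k₂ → (A ∩ range k₁).card < (A ∩ range k₂).card := by
    intro k₁ k₂ h1 h12
    apply Finset.card_lt_card
    constructor
    · exact Finset.inter_subset_inter le_rfl (Finset.range_subset_range.2 (le_of_lt h12))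
    · intro hsub
      have : k₁ ∈ A ∩ range k₂ := Finset.mem_inter.2 ⟨h1, mem_range.2 h12⟩
      have := hsub this
      rw [Finset.mem_inter, mem_range] at this
      omega
  apply Nat.cast_le.2
  apply le_min
  · apply Finset.card_le_card_of_injOn (fun k => (A ∩ range k).card)
    · intro k hk
      simp only [Finset.coe_filter, Finset.mem_coe, mem_filter, Set.mem_setOf_eq] at hk
      exact hk.2.2
    · intro k₁ h1 k₂ h2 heq
      simp only [Finset.coe_filter, Set.mem_setOf_eq] at h1 h2
      by_contra hne
      rcases lt_or_gt_of_ne hne with h | h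
      · exact absurd heq (Nat.ne_of_lt (hmono _ _ h1.2.1 h))
      · exact absurd heq.symm (Nat.ne_of_lt (hmono _ _ h2.2.1 h))
  · apply Finset.card_le_card
    intro k hk
    simp only [mem_filter] at hk
    exact Finset.mem_inter.2 ⟨hk.2.1, hk.1⟩

lemma C2' : ∀ (N : ℕ) (B : Finset ℕ), B.card ≤ N → ∀ n,
    (B.filter (fun k => (B ∩ range k).card < n)).card = min n B.card := by
  intro N
  induction N with
  | zero =>
      intro B hB n
      rw [Finset.card_eq_zero.1 (Nat.le_zero.1 hB)]
      simp
  | succ N ih =>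
      intro B hB n
      rcases le_or_gt B.card n with hle | hlt
      · have : B.filter (fun k => (B ∩ range k).card < n) = B := by
          apply Finset.filter_true_of_mem
          intro k hk
          have hsub : B ∩ range k ⊆ B.erase k := by
            intro j hj
            rw [Finset.mem_inter, mem_range] at hj
            exact Finset.mem_erase.2 ⟨by omega, hj.1⟩
          have h1 := Finset.card_le_card hsub
          rw [Finset.card_erase_of_mem hk] at h1
          have h2 : 0 < B.card := Finset.card_pos.2 ⟨k, hk⟩
          omega
        rw [this, min_eq_right hle]
      · have hne : B.Nonempty := Finset.card_pos.1 (by omega)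
        set K := B.max' hne with hK
        set B' := B.erase K with hB'
        have hKB : K ∈ B := B.max'_mem hne
        have hcard' : B'.card = B.card - 1 := Finset.card_erase_of_mem hKB
        have hBK : B ∩ range K = B' := by
          ext j
          simp only [Finset.mem_inter, mem_range, hB', Finset.mem_erase]
          constructor
          · rintro ⟨hj, hlt⟩; exact ⟨by omega, hj⟩
          · rintro ⟨hne', hj⟩
            refine ⟨hj, ?_⟩
            have := Finset.le_max' B j hj
            omega
        have hfilter : B.filter (fun k => (B ∩ range k).card < n)
            = B'.filter (fun k => (B' ∩ range k).card < n) := by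
          ext k
          simp only [mem_filter, hB', Finset.mem_erase]
          constructor
          · rintro ⟨hkB, hcard⟩
            have hkK : k ≠ K := by
              rintro rfl
              rw [hBK, hcard'] at hcard
              omega
            have hkltK : k < K := by
              have := Finset.le_max' B k hkB
              omega
            refine ⟨⟨hkK, hkB⟩, ?_⟩
            have : B ∩ range k = B' ∩ range k := by
              ext j
              simp only [Finset.mem_inter, mem_range, hB', Finset.mem_erase]
              constructor
              · rintro ⟨hj, hjk⟩; exact ⟨⟨by omega, hj⟩, hjk⟩
              · rintro ⟨⟨_, hj⟩, hjk⟩; exact ⟨hj, hjk⟩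
            rwa [this] at hcard
          · rintro ⟨⟨hkK, hkB⟩, hcard⟩
            have hkltK : k < K := by
              have := Finset.le_max' B k hkB
              omega
            refine ⟨hkB, ?_⟩
            have : B ∩ range k = B' ∩ range k := by
              ext j
              simp only [Finset.mem_inter, mem_range, hB', Finset.mem_erase]
              constructor
              · rintro ⟨hj, hjk⟩; exact ⟨⟨by omega, hj⟩, hjk⟩
              · rintro ⟨⟨_, hj⟩, hjk⟩; exact ⟨hj, hjk⟩
            rwa [this]
        rw [hfilter, ih B' (by omega) n, hcard']
        have : min n (B.card - 1) = n := min_eq_left (by omega)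
        rw [this, min_eq_left (by omega)]

lemma C2 (A : Finset ℕ) (m n : ℕ) :
    (∑ k ∈ range m, if k ∈ A ∧ (A ∩ range k).card ∈ range n then (1:NNReal) else 0)
      = ((min n (A ∩ range m).card : ℕ) : NNReal) := by
  rw [Finset.sum_boole]
  congr 1
  set B := A ∩ range m with hB
  have : (range m).filter (fun k => k ∈ A ∧ (A ∩ range k).card ∈ range n)
      = B.filter (fun k => (B ∩ range k).card < n) := by
    ext k
    simp only [mem_filter, mem_range, hB, Finset.mem_inter]
    constructor
    · rintro ⟨hkm, hkA, hcard⟩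
      refine ⟨⟨hkA, hkm⟩, ?_⟩
      have he : A ∩ range k = (A ∩ range m) ∩ range k := by
        ext j
        simp only [Finset.mem_inter, mem_range]
        constructor
        · rintro ⟨hj, hjk⟩; exact ⟨⟨hj, by omega⟩, hjk⟩
        · rintro ⟨⟨hj, _⟩, hjk⟩; exact ⟨hj, hjk⟩
      rw [← he]
      exact hcard
    · rintro ⟨⟨hkA, hkm⟩, hcard⟩
      refine ⟨hkm, hkA, ?_⟩
      have he : A ∩ range k = (A ∩ range m) ∩ range k := by
        ext j
        simp only [Finset.mem_inter, mem_range]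
        constructor
        · rintro ⟨hj, hjk⟩; exact ⟨⟨hj, by omega⟩, hjk⟩
        · rintro ⟨⟨hj, _⟩, hjk⟩; exact ⟨hj, hjk⟩
      rw [he]
      exact hcard
  rw [this, C2' B.card B le_rfl n]

/-- The combinatorial core inequality. -/
lemma core (hlam : lam ≤ 1) (s t : Finset ℕ) :
    ∑ k ∈ t, ∑ i ∈ s, c lam i k
      ≤ ∑ k ∈ range t.card, ∑ i ∈ range s.card, c lam i k := by
  rcases eq_or_lt_of_le (zero_le : (0:NNReal) ≤ lam) with hlam0 | hpos
  · -- lam = 0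
    have hc0 : ∀ i k : ℕ, c lam i k = if i = 0 then 1 else 0 := by
      intro i k
      rcases i with _ | i
      · simp [c, ← hlam0]
      · simp [c, ← hlam0]
    have hsum : ∀ u : Finset ℕ, ∀ k : ℕ, ∑ i ∈ u, c lam i k = if 0 ∈ u then 1 else 0 := by
      intro u k
      rw [Finset.sum_congr rfl fun i _ => hc0 i k]
      rw [show (fun i => if i = (0:ℕ) then (1:NNReal) else 0) = fun i => if (0:ℕ) = i then (1:NNReal) else 0 from ?_]
      · exact Finset.sum_ite_eq u 0 (fun _ => 1)
      · funext i
        by_cases h : i = 0 <;> simp [h, eq_comm]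
    simp only [hsum]
    by_cases h0 : 0 ∈ s
    · have hs : 0 < s.card := Finset.card_pos.2 ⟨0, h0⟩
      simp only [h0, if_true, mem_range, hs, Finset.sum_const, Finset.card_range]
      exact le_rfl
    · simp [h0]
  · -- 0 < lam
    set m := t.card with hm
    set n := s.card with hn
    set M := t.sup id + 1 with hM
    have htM : ∀ k ∈ t, k < M := by
      intro k hk
      exact Nat.lt_succ_of_le (Finset.le_sup (f := id) hk)
    have htsub : t ⊆ range M := fun k hk => mem_range.2 (htM k hk)
    have hmM : m ≤ M := by
      rw [hm, ← Finset.card_range M]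
      exact Finset.card_le_card htsub
    have hrM : ∀ k ∈ range m, k < M := fun k hk => lt_of_lt_of_le (mem_range.1 hk) hmM
    rw [← mul_le_mul_iff_of_pos_left hpos]
    rw [stepA hlam M t s htM, stepA hlam M (range m) (range n) hrM]
    calc ∑ A ∈ (range M).powerset,
          wt lam M A * ∑ k ∈ t, (if k ∈ A ∧ (A ∩ range k).card ∈ s then 1 else 0)
        ≤ ∑ A ∈ (range M).powerset, wt lam M A * ((min n (A ∩ t).card : ℕ) : NNReal) :=
          Finset.sum_le_sum fun A _ => mul_le_mul_right (C1 A t s) _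
      _ = ∑ A ∈ (range M).powerset, wt lam M A * ((min n (A ∩ range m).card : ℕ) : NNReal) := by
          have hsplit1 := split (range M \ t) t
            (fun B C => lam ^ (B.card + C.card) * (1-lam) ^ (M - (B.card + C.card))
              * ((min n B.card : ℕ) : NNReal)) Finset.disjoint_sdiff
          have hsplit2 := split (range M \ range m) (range m)
            (fun B C => lam ^ (B.card + C.card) * (1-lam) ^ (M - (B.card + C.card))
              * ((min n B.card : ℕ) : NNReal)) Finset.disjoint_sdiff
          rw [Finset.union_sdiff_of_subset htsub] at hsplit1
          rw [Finset.union_sdiff_of_subset (Finset.range_subset_range.2 hmM)] at hsplit2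
          have hwt : ∀ A : Finset ℕ, ∀ u : Finset ℕ,
              wt lam M A * ((min n (A ∩ u).card : ℕ) : NNReal)
              = lam ^ ((A ∩ u).card + (A \ u).card) * (1-lam) ^ (M - ((A ∩ u).card + (A \ u).card))
                * ((min n (A ∩ u).card : ℕ) : NNReal) := by
            intro A u
            rw [wt, Finset.card_inter_add_card_sdiff]
          rw [Finset.sum_congr rfl fun A _ => hwt A t,
              Finset.sum_congr rfl fun A _ => hwt A (range m), hsplit1, hsplit2]
          have hinner : ∀ b : ℕ,
              ∑ C ∈ (range M \ t).powerset,
                lam ^ (b + C.card) * (1-lam) ^ (M - (b + C.card)) * ((min n b : ℕ) : NNReal)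
              = ∑ C ∈ (range M \ range m).powerset,
                lam ^ (b + C.card) * (1-lam) ^ (M - (b + C.card)) * ((min n b : ℕ) : NNReal) := by
            intro b
            apply sum_powerset_congr (G := fun j => lam ^ (b + j) * (1-lam) ^ (M - (b + j))
              * ((min n b : ℕ) : NNReal))
            rw [Finset.card_sdiff_of_subset htsub, Finset.card_sdiff_of_subset (Finset.range_subset_range.2 hmM),
                Finset.card_range, Finset.card_range, hm]
          calc ∑ B ∈ t.powerset, ∑ C ∈ (range M \ t).powerset,
                lam ^ (B.card + C.card) * (1-lam) ^ (M - (B.card + C.card)) * ((min n B.card : ℕ) : NNReal)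
              = ∑ B ∈ t.powerset, ∑ C ∈ (range M \ range m).powerset,
                lam ^ (B.card + C.card) * (1-lam) ^ (M - (B.card + C.card)) * ((min n B.card : ℕ) : NNReal) :=
                Finset.sum_congr rfl fun B _ => hinner B.card
            _ = ∑ B ∈ (range m).powerset, ∑ C ∈ (range M \ range m).powerset,
                lam ^ (B.card + C.card) * (1-lam) ^ (M - (B.card + C.card)) * ((min n B.card : ℕ) : NNReal) := by
                apply sum_powerset_congr (G := fun b => ∑ C ∈ (range M \ range m).powerset,
                  lam ^ (b + C.card) * (1-lam) ^ (M - (b + C.card)) * ((min n b : ℕ) : NNReal))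
                rw [hm, Finset.card_range]
      _ = ∑ A ∈ (range M).powerset,
          wt lam M A * ∑ k ∈ range m, (if k ∈ A ∧ (A ∩ range k).card ∈ range n then 1 else 0) := by
          apply Finset.sum_congr rfl
          intro A _
          rw [C2 A m n]


lemma claim0 : ∀ (r : ℕ) (a cc : ℕ → ℝ), Antitone a → (∀ j, 0 ≤ a j) →
    (∀ m, 0 ≤ ∑ j ∈ range m, cc j) → 0 ≤ ∑ j ∈ range r, a j * cc j := by
  intro r
  induction r with
  | zero => intro a cc _ _ _; simp
  | succ r ih =>
      intro a cc ha ha0 hc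
      set a' : ℕ → ℝ := fun j => a (min j r) - a r with ha'
      have ha'anti : Antitone a' := by
        intro i j hij
        have : min j r ≤ min i r → a (min i r) ≤ a (min j r) := fun h => ha h
        simp only [ha']
        have := ha (min_le_min_right r hij : min i r ≤ min j r)
        linarith
      have ha'0 : ∀ j, 0 ≤ a' j := by
        intro j
        simp only [ha']
        have := ha (min_le_right j r)
        linarith
      have h1 : 0 ≤ ∑ j ∈ range r, a' j * cc j := ih a' cc ha'anti ha'0 hc
      have h2 : ∑ j ∈ range (r+1), a j * cc j
          = ∑ j ∈ range (r+1), a' j * cc j + a r * ∑ j ∈ range (r+1), cc j := by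
        rw [Finset.mul_sum, ← Finset.sum_add_distrib]
        apply Finset.sum_congr rfl
        intro j hj
        have hjr : j ≤ r := by
          have := mem_range.1 hj; omega
        simp only [ha', min_eq_left hjr]
        ring
      have h3 : ∑ j ∈ range (r+1), a' j * cc j = ∑ j ∈ range r, a' j * cc j := by
        rw [Finset.sum_range_succ]
        have : a' r = 0 := by simp [ha']
        rw [this]
        ring
      rw [h2, h3]
      have h4 : 0 ≤ a r * ∑ j ∈ range (r+1), cc j := mul_nonneg (ha0 r) (hc (r+1))
      linarith

lemma abelNN (a b B : ℕ → NNReal) (r : ℕ) (ha : Antitone a)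
    (hpb : ∀ m, ∑ j ∈ range m, b j ≤ ∑ j ∈ range m, B j) :
    ∑ j ∈ range r, a j * b j ≤ ∑ j ∈ range r, a j * B j := by
  rw [← NNReal.coe_le_coe]
  push_cast
  have h := claim0 r (fun j => (a j : ℝ)) (fun j => (B j : ℝ) - (b j : ℝ))
    (fun i j hij => NNReal.coe_le_coe.2 (ha hij)) (fun j => (a j).2)
    (by
      intro m
      rw [Finset.sum_sub_distrib]
      have := hpb m
      rw [← NNReal.coe_le_coe] at this
      push_cast at this
      linarith)
  simp only [mul_sub] at h
  rw [Finset.sum_sub_distrib] at h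
  linarith

lemma main_aux (x xd w v : ℕ → NNReal) (hx : Summable x) (hxd : Summable xd)
    (hw1 : ∀ k, w k ≤ 1) (hv1 : ∀ k, v k ≤ 1) (hvanti : Antitone v)
    (ha : ∀ t : Finset ℕ, ∑ k ∈ t, x k ≤ ∑ j ∈ range t.card, xd j)
    (hb : ∀ t : Finset ℕ, ∑ k ∈ t, w k ≤ ∑ j ∈ range t.card, v j) :
    ∑' k, x k * w k ≤ ∑' k, xd k * v k := by
  have hxw : Summable (fun k => x k * w k) :=
    NNReal.summable_of_le (fun k => mul_le_of_le_one_right (zero_le) (hw1 k)) hx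
  have hxdv : Summable (fun k => xd k * v k) :=
    NNReal.summable_of_le (fun k => mul_le_of_le_one_right (zero_le) (hv1 k)) hxd
  apply Summable.tsum_le_of_sum_le hxw
  intro t
  set r := t.card with hr
  -- enumeration of t
  set e : Fin r → ℕ := fun j => ((t.equivFin.symm j) : ℕ) with he
  have he_mem : ∀ j, e j ∈ t := fun j => (t.equivFin.symm j).2
  have he_inj : Function.Injective e := by
    intro i j hij
    exact t.equivFin.symm.injective (Subtype.ext hij)
  have hsum_t : ∀ F : ℕ → NNReal, ∑ k ∈ t, F k = ∑ j : Fin r, F (e j) := by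
    intro F
    have h1 : ∑ j : Fin r, F (e j) = ∑ k : ↥t, F ↑k :=
      Equiv.sum_comp t.equivFin.symm (fun k : ↥t => F ↑k)
    rw [h1, Finset.univ_eq_attach]
    exact (Finset.sum_attach t F).symm
  set f : Fin r → NNReal := fun j => x (e j) with hf
  set g : Fin r → NNReal := fun j => w (e j) with hg
  set σ : Equiv.Perm (Fin r) := Tuple.sort (fun j => OrderDual.toDual (f j)) with hσ
  set φ : Fin r → NNReal := fun j => f (σ j) with hφ
  have hφanti : Antitone φ := by
    intro i j hij
    exact Tuple.monotone_sort (fun j => OrderDual.toDual (f j)) hij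
  set ψ : Fin r → NNReal := fun j => g (σ j) with hψ
  set τ : Equiv.Perm (Fin r) := Tuple.sort (fun j => OrderDual.toDual (ψ j)) with hτ
  set q : Fin r → NNReal := fun j => ψ (τ j) with hq
  have hqanti : Antitone q := by
    intro i j hij
    exact Tuple.monotone_sort (fun j => OrderDual.toDual (ψ j)) hij
  -- rearrangement
  have hmono : Monovary φ q := by
    intro i j hij
    rcases le_or_gt i j with h | h
    · exact absurd (hqanti h) (not_le.2 hij)
    · exact hφanti h.le
  have hrearr : ∑ k ∈ t, x k * w k ≤ ∑ j : Fin r, φ j * q j := by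
    rw [hsum_t (fun k => x k * w k)]
    have h1 : ∑ j : Fin r, x (e j) * w (e j) = ∑ j : Fin r, φ j * ψ j :=
      (Equiv.sum_comp σ (fun j => x (e j) * w (e j))).symm
    rw [h1]
    have h2 : ∀ j, ψ j = q (τ.symm j) := by
      intro j
      simp [hq, Equiv.apply_symm_apply]
    calc ∑ j : Fin r, φ j * ψ j = ∑ j : Fin r, φ j * q (τ.symm j) := by
          apply Finset.sum_congr rfl; intro j _; rw [h2]
      _ ≤ ∑ j : Fin r, φ j * q j := hmono.sum_mul_comp_perm_le_sum_mul
  -- padded sequences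
  set P : ℕ → NNReal := fun j => if h : j < r then φ ⟨j, h⟩ else 0 with hP
  set Q : ℕ → NNReal := fun j => if h : j < r then q ⟨j, h⟩ else 0 with hQ
  have hPanti : Antitone P := by
    intro i j hij
    simp only [hP]
    by_cases hjr : j < r
    · have hir : i < r := lt_of_le_of_lt hij hjr
      rw [dif_pos hjr, dif_pos hir]
      exact hφanti (by exact hij)
    · rw [dif_neg hjr]
      exact zero_le
  have hfin : ∑ j : Fin r, φ j * q j = ∑ j ∈ range r, P j * Q j := by
    rw [← Fin.sum_univ_eq_sum_range (fun j => P j * Q j) r]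
    apply Finset.sum_congr rfl
    intro j _
    simp only [hP, hQ, dif_pos j.isLt, Fin.eta]
  -- partial sum bound for Q
  have hQbound : ∀ m, ∑ j ∈ range m, Q j ≤ ∑ j ∈ range m, v j := by
    intro m
    set m' := min m r with hm'
    have hzero : ∑ j ∈ range m, Q j = ∑ j ∈ range m', Q j := by
      rw [← Finset.sum_subset (Finset.range_subset_range.2 (min_le_left m r))]
      intro j hj hj'
      rw [mem_range] at hj
      rw [mem_range] at hj'
      have : ¬ j < r := by omega
      simp [hQ, this]
    rw [hzero]
    set ρ : ℕ → ℕ := fun j => if h : j < r then e (σ (τ ⟨j, h⟩)) else 0 with hρ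
    have hρinj : ∀ i ∈ range m', ∀ j ∈ range m', ρ i = ρ j → i = j := by
      intro i hi j hj hij
      rw [mem_range] at hi hj
      have hir : i < r := lt_of_lt_of_le hi (min_le_right m r)
      have hjr : j < r := lt_of_lt_of_le hj (min_le_right m r)
      simp only [hρ, dif_pos hir, dif_pos hjr] at hij
      exact congrArg Fin.val (τ.injective (σ.injective (he_inj hij)))
    have hQval : ∀ j ∈ range m', Q j = w (ρ j) := by
      intro j hj
      rw [mem_range] at hj
      have hjr : j < r := lt_of_lt_of_le hj (min_le_right m r)
      simp only [hQ, hρ, dif_pos hjr, hq, hψ, hg]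
    set u := (range m').image ρ with hu
    have hucard : u.card = m' := by
      rw [hu, Finset.card_image_of_injOn hρinj, Finset.card_range]
    calc ∑ j ∈ range m', Q j = ∑ j ∈ range m', w (ρ j) := Finset.sum_congr rfl hQval
      _ = ∑ k ∈ u, w k := (Finset.sum_image hρinj).symm
      _ ≤ ∑ j ∈ range u.card, v j := hb u
      _ = ∑ j ∈ range m', v j := by rw [hucard]
      _ ≤ ∑ j ∈ range m, v j := Finset.sum_le_sum_of_subset
            (Finset.range_subset_range.2 (min_le_left m r))
  -- partial sum bound for P
  have hPbound : ∀ m, ∑ j ∈ range m, P j ≤ ∑ j ∈ range m, xd j := by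
    intro m
    set m' := min m r with hm'
    have hzero : ∑ j ∈ range m, P j = ∑ j ∈ range m', P j := by
      rw [← Finset.sum_subset (Finset.range_subset_range.2 (min_le_left m r))]
      intro j hj hj'
      rw [mem_range] at hj
      rw [mem_range] at hj'
      have : ¬ j < r := by omega
      simp [hP, this]
    rw [hzero]
    set ρ : ℕ → ℕ := fun j => if h : j < r then e (σ ⟨j, h⟩) else 0 with hρ
    have hρinj : ∀ i ∈ range m', ∀ j ∈ range m', ρ i = ρ j → i = j := by
      intro i hi j hj hij
      rw [mem_range] at hi hj
      have hir : i < r := lt_of_lt_of_le hi (min_le_right m r)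
      have hjr : j < r := lt_of_lt_of_le hj (min_le_right m r)
      simp only [hρ, dif_pos hir, dif_pos hjr] at hij
      exact congrArg Fin.val (σ.injective (he_inj hij))
    have hPval : ∀ j ∈ range m', P j = x (ρ j) := by
      intro j hj
      rw [mem_range] at hj
      have hjr : j < r := lt_of_lt_of_le hj (min_le_right m r)
      simp only [hP, hρ, dif_pos hjr, hφ, hf]
    set u := (range m').image ρ with hu
    have hucard : u.card = m' := by
      rw [hu, Finset.card_image_of_injOn hρinj, Finset.card_range]
    calc ∑ j ∈ range m', P j = ∑ j ∈ range m', x (ρ j) := Finset.sum_congr rfl hPval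
      _ = ∑ k ∈ u, x k := (Finset.sum_image hρinj).symm
      _ ≤ ∑ j ∈ range u.card, xd j := ha u
      _ = ∑ j ∈ range m', xd j := by rw [hucard]
      _ ≤ ∑ j ∈ range m, xd j := Finset.sum_le_sum_of_subset
            (Finset.range_subset_range.2 (min_le_left m r))
  -- Abel twice
  calc ∑ k ∈ t, x k * w k ≤ ∑ j : Fin r, φ j * q j := hrearr
    _ = ∑ j ∈ range r, P j * Q j := hfin
    _ ≤ ∑ j ∈ range r, P j * v j := abelNN P Q v r hPanti hQbound
    _ = ∑ j ∈ range r, v j * P j := by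
        apply Finset.sum_congr rfl; intro j _; rw [mul_comm]
    _ ≤ ∑ j ∈ range r, v j * xd j := abelNN v P xd r hvanti hPbound
    _ = ∑ j ∈ range r, xd j * v j := by
        apply Finset.sum_congr rfl; intro j _; rw [mul_comm]
    _ ≤ ∑' k, xd k * v k := Summable.sum_le_tsum (range r) (fun _ _ => zero_le) hxdv

lemma summable_cy (hlam : lam ≤ 1) {y : ℕ → NNReal} (hy : Summable y) (i : ℕ) :
    Summable (fun k => c lam i k * y k) :=
  NNReal.summable_of_le (fun k => mul_le_of_le_one_left (zero_le) (c_le_one hlam i k)) hy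

lemma total_eq (hlam : lam ≤ 1) {y : ℕ → NNReal} (hy : Summable y) :
    ∑' i, ∑' k, c lam i k * y k = ∑' k, y k := by
  have hE : ∀ k : ℕ, ∑' i : ℕ, ((c lam i k : ℝ≥0∞)) = 1 := by
    intro k
    rw [tsum_eq_sum (s := range (k+1)) ?_]
    · rw [← ENNReal.coe_finset_sum, sum_c hlam]
      exact ENNReal.coe_one
    · intro i hi
      rw [mem_range] at hi
      rw [c_eq_zero (by omega)]
      exact ENNReal.coe_zero
  have h2 : ∑' (i : ℕ), ∑' (k : ℕ), ((c lam i k * y k : NNReal) : ℝ≥0∞)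
      = ((∑' k, y k : NNReal) : ℝ≥0∞) := by
    calc ∑' (i : ℕ), ∑' (k : ℕ), ((c lam i k * y k : NNReal) : ℝ≥0∞)
        = ∑' (k : ℕ), ∑' (i : ℕ), ((c lam i k : ℝ≥0∞) * (y k : ℝ≥0∞)) := by
          rw [ENNReal.tsum_comm]
          exact tsum_congr fun k => tsum_congr fun i => ENNReal.coe_mul _ _
      _ = ∑' (k : ℕ), (∑' (i : ℕ), (c lam i k : ℝ≥0∞)) * (y k : ℝ≥0∞) := by
          exact tsum_congr fun k => ENNReal.tsum_mul_right
      _ = ∑' (k : ℕ), (y k : ℝ≥0∞) := by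
          exact tsum_congr fun k => by rw [hE k, one_mul]
      _ = ((∑' k, y k : NNReal) : ℝ≥0∞) := (ENNReal.coe_tsum hy).symm
  have hcoe : ∀ i : ℕ, ((∑' k, c lam i k * y k : NNReal) : ℝ≥0∞)
      = ∑' (k : ℕ), ((c lam i k * y k : NNReal) : ℝ≥0∞) :=
    fun i => ENNReal.coe_tsum (summable_cy hlam hy i)
  have hTsum : Summable (fun i => ∑' k, c lam i k * y k) := by
    rw [← ENNReal.tsum_coe_ne_top_iff_summable]
    rw [show (fun i => ((∑' k, c lam i k * y k : NNReal) : ℝ≥0∞))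
        = fun i => ∑' (k : ℕ), ((c lam i k * y k : NNReal) : ℝ≥0∞) from funext hcoe]
    rw [h2]
    exact ENNReal.coe_ne_top
  have : ((∑' i, ∑' k, c lam i k * y k : NNReal) : ℝ≥0∞)
      = ((∑' k, y k : NNReal) : ℝ≥0∞) := by
    rw [ENNReal.coe_tsum hTsum]
    rw [show (fun i => ((∑' k, c lam i k * y k : NNReal) : ℝ≥0∞))
        = fun i => ∑' (k : ℕ), ((c lam i k * y k : NNReal) : ℝ≥0∞) from funext hcoe]
    exact h2
  exact_mod_cast this


end ThinFock


/-- Fock-optimality of the thinning: `T_λ(x)` is majorized by `T_λ(x↓)`, where `x↓` is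
the decreasing rearrangement of `x` (characterized by antitonicity together with its
partial sums being the suprema of sums of `x` over finite index sets of given
cardinality). Majorization is expressed via sums over arbitrary finite index sets on the
left, whose supremum yields the partial sums of the decreasing rearrangement of
`T_λ(x)`, together with equality of the total sums. -/
theorem thinning_fock_optimal (x : ℕ → NNReal) (hx : Summable x)
    (xd : ℕ → NNReal) (hxd : Antitone xd)
    (hrear : ∀ n, ∑ i ∈ Finset.range n, xd i
      = ⨆ s : {s : Finset ℕ // s.card = n}, ∑ i ∈ s.1, x i)
    (lam : NNReal) (hlam : lam ≤ 1) :
    (∀ n, ∀ s : Finset ℕ, s.card = n →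
        ∑ i ∈ s, (∑' k, (Nat.choose k i : NNReal) * lam ^ i * (1 - lam) ^ (k - i) * x k)
          ≤ ∑ i ∈ Finset.range n,
              (∑' k, (Nat.choose k i : NNReal) * lam ^ i * (1 - lam) ^ (k - i) * xd k))
    ∧ (∑' i, ∑' k, (Nat.choose k i : NNReal) * lam ^ i * (1 - lam) ^ (k - i) * x k)
        = ∑' i, ∑' k, (Nat.choose k i : NNReal) * lam ^ i * (1 - lam) ^ (k - i) * xd k := by
  haveI : ∀ n : ℕ, Nonempty {s : Finset ℕ // s.card = n} :=
    fun n => ⟨⟨Finset.range n, Finset.card_range n⟩⟩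
  -- (a) : finset sums of x dominated by initial sums of xd
  have ha : ∀ t : Finset ℕ, ∑ k ∈ t, x k ≤ ∑ j ∈ Finset.range t.card, xd j := by
    intro t
    rw [hrear t.card]
    have hbdd : BddAbove (Set.range fun s : {s : Finset ℕ // s.card = t.card} => ∑ i ∈ s.1, x i) := by
      refine ⟨∑' k, x k, ?_⟩
      rintro a ⟨⟨s', hs'⟩, rfl⟩
      exact Summable.sum_le_tsum s' (fun _ _ => zero_le) hx
    exact le_ciSup hbdd (⟨t, rfl⟩ : {s : Finset ℕ // s.card = t.card})
  -- xd is summable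
  have hxdsum : Summable xd := by
    rw [← ENNReal.tsum_coe_ne_top_iff_summable]
    have hle : ∑' k, ((xd k : ℝ≥0∞)) ≤ ((∑' k, x k : NNReal) : ℝ≥0∞) := by
      rw [ENNReal.tsum_eq_iSup_sum]
      apply iSup_le
      intro s'
      calc ∑ k ∈ s', ((xd k : ℝ≥0∞)) = ((∑ k ∈ s', xd k : NNReal) : ℝ≥0∞) :=
            (ENNReal.coe_finset_sum _ _).symm
        _ ≤ ((∑' k, x k : NNReal) : ℝ≥0∞) := by
            apply ENNReal.coe_le_coe.2
            have h1 : s' ⊆ Finset.range (s'.sup id + 1) := fun k hk =>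
              Finset.mem_range.2 (Nat.lt_succ_of_le (Finset.le_sup (f := id) hk))
            calc ∑ k ∈ s', xd k ≤ ∑ k ∈ Finset.range (s'.sup id + 1), xd k :=
                  Finset.sum_le_sum_of_subset h1
              _ ≤ ∑' k, x k := by
                  rw [hrear]
                  apply ciSup_le
                  rintro ⟨s'', hs''⟩
                  exact Summable.sum_le_tsum s'' (fun _ _ => zero_le) hx
    exact ne_top_of_le_ne_top ENNReal.coe_ne_top hle
  -- total sums agree
  have htot : ∑' k, xd k = ∑' k, x k := by
    apply le_antisymm
    · apply Summable.tsum_le_of_sum_le hxdsum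
      intro s'
      have h1 : s' ⊆ Finset.range (s'.sup id + 1) := fun k hk =>
        Finset.mem_range.2 (Nat.lt_succ_of_le (Finset.le_sup (f := id) hk))
      calc ∑ k ∈ s', xd k ≤ ∑ k ∈ Finset.range (s'.sup id + 1), xd k :=
            Finset.sum_le_sum_of_subset h1
        _ ≤ ∑' k, x k := by
            rw [hrear]
            apply ciSup_le
            rintro ⟨s'', hs''⟩
            exact Summable.sum_le_tsum s'' (fun _ _ => zero_le) hx
    · apply Summable.tsum_le_of_sum_le hx
      intro s'
      calc ∑ k ∈ s', x k ≤ ∑ j ∈ Finset.range s'.card, xd j := ha s'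
        _ ≤ ∑' k, xd k := Summable.sum_le_tsum _ (fun _ _ => zero_le) hxdsum
  constructor
  · -- majorization part
    intro n s hs
    subst hs
    have hL : ∑ i ∈ s, (∑' k, ThinFock.c lam i k * x k)
        = ∑' k, x k * (∑ i ∈ s, ThinFock.c lam i k) := by
      rw [← Summable.tsum_finsetSum (fun i _ => ThinFock.summable_cy hlam hx i)]
      apply tsum_congr
      intro k
      rw [← Finset.sum_mul, mul_comm]
    have hR : ∑ i ∈ Finset.range s.card, (∑' k, ThinFock.c lam i k * xd k)
        = ∑' k, xd k * (∑ i ∈ Finset.range s.card, ThinFock.c lam i k) := by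
      rw [← Summable.tsum_finsetSum (fun i _ => ThinFock.summable_cy hlam hxdsum i)]
      apply tsum_congr
      intro k
      rw [← Finset.sum_mul, mul_comm]
    show (∑ i ∈ s, (∑' k, ThinFock.c lam i k * x k))
      ≤ ∑ i ∈ Finset.range s.card, (∑' k, ThinFock.c lam i k * xd k)
    rw [hL, hR]
    apply ThinFock.main_aux x xd _ _ hx hxdsum
      (ThinFock.sum_c_le_one hlam s) (ThinFock.sum_c_le_one hlam (Finset.range s.card))
      (ThinFock.v_anti hlam s.card) ha
    intro t
    exact ThinFock.core hlam s t
  · -- total sums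
    calc ∑' i, ∑' k, (Nat.choose k i : NNReal) * lam ^ i * (1 - lam) ^ (k - i) * x k
        = ∑' i, ∑' k, ThinFock.c lam i k * x k := rfl
      _ = ∑' k, x k := ThinFock.total_eq hlam hx
      _ = ∑' k, xd k := htot.symm
      _ = ∑' i, ∑' k, ThinFock.c lam i k * xd k := (ThinFock.total_eq hlam hxdsum).symm
      _ = ∑' i, ∑' k, (Nat.choose k i : NNReal) * lam ^ i * (1 - lam) ^ (k - i) * xd k := rfl
end

section
/- Let s, s↓ : [0,∞) → ℝ^{N+1} with s continuous, s(0) = s↓(0), s_N(t) = s↓_N(t) for all t, (s↓)_n'(t) = (n+1)(s↓_{n+1}(t) − s↓_n(t)) for n < N, and s_n'(t) ≤ (n+1)(s_{n+1}(t) − s_n(t)) for n < N wherever s is differentiable (assume differentiable everywhere). Then s_n(t) ≤ s↓_n(t) for all t ≥ 0 and all n = 0,…,N. -/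
/-- Key comparison lemma for Fock-optimality of the attenuator: if `s` and `s↓` have the
same initial data, the same top component, `s↓` solves `(s↓)_n' = (n+1)(s↓_{n+1} - s↓_n)`
and `s` satisfies the corresponding differential inequality, then `s_n(t) ≤ s↓_n(t)` for
all `t ≥ 0` and `n ≤ N`. -/
theorem attenuator_comparison (N : ℕ) (s sd : ℝ → ℕ → ℝ) (d : ℕ → ℝ → ℝ)
    (hsder : ∀ n < N, ∀ t : ℝ, 0 ≤ t → HasDerivAt (fun τ => s τ n) (d n t) t)
    (hsineq : ∀ n < N, ∀ t : ℝ, 0 ≤ t → d n t ≤ (n + 1) * (s t (n + 1) - s t n))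
    (hsdder : ∀ n < N, ∀ t : ℝ, 0 ≤ t →
        HasDerivAt (fun τ => sd τ n) ((n + 1) * (sd t (n + 1) - sd t n)) t)
    (h0 : ∀ n ≤ N, s 0 n = sd 0 n)
    (htopeq : ∀ t : ℝ, 0 ≤ t → s t N = sd t N) :
    ∀ t : ℝ, 0 ≤ t → ∀ n ≤ N, s t n ≤ sd t n := by
  -- downward induction: prove for all m, all n with n + m = N
  suffices H : ∀ m n, n + m = N → ∀ t : ℝ, 0 ≤ t → s t n ≤ sd t n by
    intro t ht n hn
    exact H (N - n) n (by omega) t ht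
  intro m
  induction m with
  | zero =>
    intro n hn t ht
    subst hn
    exact (htopeq t ht).le
  | succ m ih =>
    intro n hn t ht
    have hnN : n < N := by omega
    have ih' : ∀ t : ℝ, 0 ≤ t → s t (n + 1) ≤ sd t (n + 1) :=
      fun t ht => ih (n + 1) (by omega) t ht
    set c : ℝ := (n : ℝ) + 1 with hc
    have hcpos : 0 < c := by positivity
    set g : ℝ → ℝ := fun τ => (s τ n - sd τ n) * Real.exp (c * τ) with hg
    -- derivative of g
    have hgder : ∀ τ : ℝ, 0 ≤ τ → HasDerivAt g
        ((d n τ - c * (sd τ (n + 1) - sd τ n)) * Real.exp (c * τ)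
          + (s τ n - sd τ n) * (c * Real.exp (c * τ))) τ := by
      intro τ hτ
      have h1 : HasDerivAt (fun τ => s τ n - sd τ n)
          (d n τ - c * (sd τ (n + 1) - sd τ n)) τ :=
        (hsder n hnN τ hτ).sub (by
          have := hsdder n hnN τ hτ
          push_cast at this ⊢
          exact this)
      have h2 : HasDerivAt (fun τ : ℝ => Real.exp (c * τ)) (c * Real.exp (c * τ)) τ := by
        have := ((hasDerivAt_id τ).const_mul c).exp
        simpa [mul_comm] using this
      exact h1.mul h2
    -- g is antitone on [0,∞)
    have hanti : AntitoneOn g (Set.Ici (0 : ℝ)) := by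
      apply antitoneOn_of_deriv_nonpos (convex_Ici 0)
      · intro τ hτ
        exact (hgder τ hτ).continuousAt.continuousWithinAt
      · intro τ hτ
        rw [interior_Ici] at hτ
        exact ((hgder τ hτ.le).differentiableAt.differentiableWithinAt)
      · intro τ hτ
        rw [interior_Ici] at hτ
        have hτ0 : (0 : ℝ) ≤ τ := le_of_lt hτ
        rw [(hgder τ hτ0).deriv]
        have hexp : 0 < Real.exp (c * τ) := Real.exp_pos _
        have h1 : d n τ ≤ c * (s τ (n + 1) - s τ n) := by
          rw [hc]
          exact hsineq n hnN τ hτ0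
        have h2 : s τ (n + 1) ≤ sd τ (n + 1) := ih' τ hτ0
        have key : (d n τ - c * (sd τ (n + 1) - sd τ n)) + (s τ n - sd τ n) * c ≤ 0 := by
          nlinarith [hcpos.le]
        calc (d n τ - c * (sd τ (n + 1) - sd τ n)) * Real.exp (c * τ)
              + (s τ n - sd τ n) * (c * Real.exp (c * τ))
            = ((d n τ - c * (sd τ (n + 1) - sd τ n)) + (s τ n - sd τ n) * c)
                * Real.exp (c * τ) := by ring
          _ ≤ 0 * Real.exp (c * τ) := by
              exact mul_le_mul_of_nonneg_right key hexp.le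
          _ = 0 := by ring
    have hg0 : g 0 = 0 := by
      simp [hg, h0 n (le_of_lt hnN)]
    have : g t ≤ g 0 := hanti (Set.self_mem_Ici) (Set.mem_Ici.mpr ht) ht
    rw [hg0] at this
    simp only [hg] at this
    have hexp : 0 < Real.exp (c * t) := Real.exp_pos _
    nlinarith [this]
end

section
/- Let X, Y, Z be positive semidefinite Hermitian n×n matrices such that the decreasing eigenvalue sequence of Y is weakly sub-majorized by that of Z, and Z is diagonal with decreasing diagonal entries. Then trace(X·Y) ≤ trace(X↓·Z), where X↓ is the diagonal matrix whose diagonal is the decreasing eigenvalue sequence of X. -/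
open ComplexOrder Matrix Finset



private lemma tele_aux (x : ℕ → ℝ) : ∀ n k, k ≤ n → ∑ m ∈ Finset.Ico k n, (x m - x (m+1)) = x k - x n := by
  intro n
  induction n with
  | zero => intro k hk; interval_cases k; simp
  | succ n ih =>
    intro k hk
    rcases Nat.lt_or_ge k (n+1) with h | h
    · have hk' : k ≤ n := by omega
      rw [Finset.sum_Ico_succ_top hk', ih k hk']; ring
    · have : k = n + 1 := by omega
      subst this; simp

private lemma abel_ite (x : ℕ → ℝ) (n k : ℕ) (hk : k < n) (hxn : x n = 0) :
    x k = ∑ m ∈ Finset.range n, (if k ≤ m then x m - x (m+1) else 0) := by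
  rw [← Finset.sum_filter]
  have : (Finset.range n).filter (fun m => k ≤ m) = Finset.Ico k n := by
    ext m; simp [Finset.mem_Ico, Finset.mem_range]; omega
  rw [this, tele_aux x n k hk.le, hxn, sub_zero]

private lemma count_le_aux (n m : ℕ) (hm : m < n) :
    ∑ k ∈ Finset.range n, (if k ≤ m then (1:ℝ) else 0) = (m+1 : ℕ) := by
  rw [← Finset.sum_filter]
  have : (Finset.range n).filter (fun k => k ≤ m) = Finset.range (m+1) := by
    ext k; simp [Finset.mem_range]; omega
  simp [this]

private lemma sum4_comm {M : Type*} [AddCommMonoid M] {ι : Type*} (s : Finset ι)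
    (F : ι → ι → ι → ι → M) :
    ∑ m ∈ s, ∑ p ∈ s, ∑ k ∈ s, ∑ l ∈ s, F k l m p
      = ∑ k ∈ s, ∑ l ∈ s, ∑ m ∈ s, ∑ p ∈ s, F k l m p := by
  calc ∑ m ∈ s, ∑ p ∈ s, ∑ k ∈ s, ∑ l ∈ s, F k l m p
      = ∑ m ∈ s, ∑ k ∈ s, ∑ p ∈ s, ∑ l ∈ s, F k l m p :=
        Finset.sum_congr rfl fun m _ => Finset.sum_comm
    _ = ∑ k ∈ s, ∑ m ∈ s, ∑ p ∈ s, ∑ l ∈ s, F k l m p := Finset.sum_comm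
    _ = ∑ k ∈ s, ∑ m ∈ s, ∑ l ∈ s, ∑ p ∈ s, F k l m p :=
        Finset.sum_congr rfl fun k _ => Finset.sum_congr rfl fun m _ => Finset.sum_comm
    _ = ∑ k ∈ s, ∑ l ∈ s, ∑ m ∈ s, ∑ p ∈ s, F k l m p :=
        Finset.sum_congr rfl fun k _ => Finset.sum_comm

private lemma core_ineq (n : ℕ) (C : ℕ → ℕ → ℝ) (x y z : ℕ → ℝ)
    (hC0 : ∀ k l, 0 ≤ C k l)
    (hrow : ∀ k, k < n → ∑ l ∈ Finset.range n, C k l ≤ 1)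
    (hcol : ∀ l, l < n → ∑ k ∈ Finset.range n, C k l ≤ 1)
    (hxa : Antitone x) (hxn : x n = 0)
    (hya : Antitone y) (hyn : y n = 0)
    (hyz : ∀ m, m < n → ∑ l ∈ Finset.range (m+1), y l ≤ ∑ l ∈ Finset.range (m+1), z l) :
    ∑ k ∈ Finset.range n, ∑ l ∈ Finset.range n, C k l * x k * y l
      ≤ ∑ k ∈ Finset.range n, x k * z k := by
  set a : ℕ → ℝ := fun m => x m - x (m+1) with ha
  set b : ℕ → ℝ := fun m => y m - y (m+1) with hb
  have ha0 : ∀ m, 0 ≤ a m := fun m => sub_nonneg.2 (hxa (Nat.le_succ m))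
  have hb0 : ∀ m, 0 ≤ b m := fun m => sub_nonneg.2 (hya (Nat.le_succ m))
  have hxk : ∀ k, k < n → x k = ∑ m ∈ Finset.range n, (if k ≤ m then a m else 0) :=
    fun k hk => abel_ite x n k hk hxn
  have hyk : ∀ l, l < n → y l = ∑ p ∈ Finset.range n, (if l ≤ p then b p else 0) :=
    fun l hl => abel_ite y n l hl hyn
  set S : ℕ → ℕ → ℝ := fun m p =>
    ∑ k ∈ Finset.range n, ∑ l ∈ Finset.range n,
      (if k ≤ m then if l ≤ p then C k l else 0 else 0) with hSdef
  set MinC : ℕ → ℕ → ℝ := fun m p =>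
    ∑ l ∈ Finset.range n, (if l ≤ m ∧ l ≤ p then (1:ℝ) else 0) with hMdef
  -- step 1
  have step1 : ∑ k ∈ Finset.range n, ∑ l ∈ Finset.range n, C k l * x k * y l
      = ∑ m ∈ Finset.range n, ∑ p ∈ Finset.range n, a m * b p * S m p := by
    have e1 : ∑ m ∈ Finset.range n, ∑ p ∈ Finset.range n, a m * b p * S m p
        = ∑ m ∈ Finset.range n, ∑ p ∈ Finset.range n, ∑ k ∈ Finset.range n,
            ∑ l ∈ Finset.range n,
            ((if k ≤ m then a m else 0) * (if l ≤ p then b p else 0) * C k l) := by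
      refine Finset.sum_congr rfl fun m _ => Finset.sum_congr rfl fun p _ => ?_
      simp only [hSdef, Finset.mul_sum]
      refine Finset.sum_congr rfl fun k _ => Finset.sum_congr rfl fun l _ => ?_
      split_ifs <;> ring
    rw [e1, sum4_comm]
    refine Finset.sum_congr rfl fun k hk => Finset.sum_congr rfl fun l hl => ?_
    rw [hxk k (Finset.mem_range.1 hk), hyk l (Finset.mem_range.1 hl)]
    rw [mul_assoc, Finset.sum_mul_sum, Finset.mul_sum]
    refine Finset.sum_congr rfl fun m _ => ?_
    rw [Finset.mul_sum]
    refine Finset.sum_congr rfl fun p _ => ?_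
    ring
  rw [step1]
  -- bound S by MinC
  have hMval : ∀ m p, m < n → p < n → MinC m p = ((min m p + 1 : ℕ) : ℝ) := by
    intro m p hm hp
    show (∑ l ∈ Finset.range n, if l ≤ m ∧ l ≤ p then (1:ℝ) else 0) = _
    rw [← Finset.sum_filter]
    have : (Finset.range n).filter (fun l => l ≤ m ∧ l ≤ p) = Finset.range (min m p + 1) := by
      ext l; simp [Finset.mem_range]; omega
    simp [this]
  have hS1 : ∀ m p, m < n → S m p ≤ (m + 1 : ℕ) := by
    intro m p hm
    have e : S m p = ∑ k ∈ Finset.range n,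
        (if k ≤ m then (∑ l ∈ Finset.range n, if l ≤ p then C k l else 0) else 0) := by
      refine Finset.sum_congr rfl fun k _ => ?_
      split_ifs with h <;> simp [h]
    rw [e, ← count_le_aux n m hm]
    refine Finset.sum_le_sum fun k hk => ?_
    split_ifs with h
    · refine le_trans (Finset.sum_le_sum fun l _ => ?_) (hrow k (Finset.mem_range.1 hk))
      split_ifs with h2
      · exact le_rfl
      · exact hC0 k l
    · exact le_rfl
  have hS2 : ∀ m p, p < n → S m p ≤ (p + 1 : ℕ) := by
    intro m p hp
    have e : S m p = ∑ l ∈ Finset.range n,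
        (if l ≤ p then (∑ k ∈ Finset.range n, if k ≤ m then C k l else 0) else 0) := by
      rw [show S m p = ∑ l ∈ Finset.range n, ∑ k ∈ Finset.range n,
          (if k ≤ m then if l ≤ p then C k l else 0 else 0) from Finset.sum_comm]
      refine Finset.sum_congr rfl fun l _ => ?_
      split_ifs with h
      · refine Finset.sum_congr rfl fun k _ => ?_
        split_ifs with h2 <;> simp [h]
      · refine Finset.sum_eq_zero fun k _ => ?_
        split_ifs with h2 <;> simp [h]
    rw [e, ← count_le_aux n p hp]
    refine Finset.sum_le_sum fun l hl => ?_
    split_ifs with h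
    · refine le_trans (Finset.sum_le_sum fun k _ => ?_) (hcol l (Finset.mem_range.1 hl))
      split_ifs with h2
      · exact le_rfl
      · exact hC0 k l
    · exact le_rfl
  have hSM : ∀ m p, m < n → p < n → S m p ≤ MinC m p := by
    intro m p hm hp
    rw [hMval m p hm hp]
    rcases le_total m p with h | h
    · refine le_trans (hS1 m p hm) ?_
      have : min m p = m := min_eq_left h
      rw [this]
    · refine le_trans (hS2 m p hp) ?_
      have : min m p = p := min_eq_right h
      rw [this]
  -- claim2
  have claim2 : ∀ m, m < n → ∑ p ∈ Finset.range n, b p * MinC m p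
      = ∑ l ∈ Finset.range (m+1), y l := by
    intro m hm
    have e1 : ∑ p ∈ Finset.range n, b p * MinC m p
        = ∑ p ∈ Finset.range n, ∑ l ∈ Finset.range n,
            (if l ≤ m ∧ l ≤ p then b p else 0) := by
      refine Finset.sum_congr rfl fun p _ => ?_
      show b p * (∑ l ∈ Finset.range n, if l ≤ m ∧ l ≤ p then (1:ℝ) else 0) = _
      rw [Finset.mul_sum]
      refine Finset.sum_congr rfl fun l _ => ?_
      split_ifs <;> ring
    rw [e1, Finset.sum_comm]
    have e2 : ∀ l, l ∈ Finset.range n →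
        ∑ p ∈ Finset.range n, (if l ≤ m ∧ l ≤ p then b p else 0)
          = (if l ≤ m then y l else 0) := by
      intro l hl
      split_ifs with h
      · rw [hyk l (Finset.mem_range.1 hl)]
        refine Finset.sum_congr rfl fun p _ => ?_
        rw [if_congr (and_iff_right h) rfl rfl]
      · refine Finset.sum_eq_zero fun p _ => ?_
        exact if_neg (fun hc => h hc.1)
    rw [Finset.sum_congr rfl e2, ← Finset.sum_filter]
    have : (Finset.range n).filter (fun l => l ≤ m) = Finset.range (m+1) := by
      ext l; simp [Finset.mem_range]; omega
    rw [this]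
  -- claim3
  have claim3 : ∑ m ∈ Finset.range n, a m * (∑ k ∈ Finset.range (m+1), z k)
      = ∑ k ∈ Finset.range n, x k * z k := by
    have e1 : ∀ m, m ∈ Finset.range n →
        a m * (∑ k ∈ Finset.range (m+1), z k)
          = ∑ k ∈ Finset.range n, (if k ≤ m then a m * z k else 0) := by
      intro m hm
      rw [← Finset.sum_filter]
      have : (Finset.range n).filter (fun k => k ≤ m) = Finset.range (m+1) := by
        ext k; simp [Finset.mem_range]; have := Finset.mem_range.1 hm; omega
      rw [this, Finset.mul_sum]
    rw [Finset.sum_congr rfl e1, Finset.sum_comm]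
    refine Finset.sum_congr rfl fun k hk => ?_
    rw [hxk k (Finset.mem_range.1 hk), Finset.sum_mul]
    refine Finset.sum_congr rfl fun m _ => ?_
    split_ifs <;> ring
  -- assemble
  calc ∑ m ∈ Finset.range n, ∑ p ∈ Finset.range n, a m * b p * S m p
      ≤ ∑ m ∈ Finset.range n, ∑ p ∈ Finset.range n, a m * b p * MinC m p := by
        refine Finset.sum_le_sum fun m hm => Finset.sum_le_sum fun p hp => ?_
        exact mul_le_mul_of_nonneg_left
          (hSM m p (Finset.mem_range.1 hm) (Finset.mem_range.1 hp))
          (mul_nonneg (ha0 m) (hb0 p))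
    _ = ∑ m ∈ Finset.range n, a m * (∑ l ∈ Finset.range (m+1), y l) := by
        refine Finset.sum_congr rfl fun m hm => ?_
        rw [← claim2 m (Finset.mem_range.1 hm), Finset.mul_sum]
        refine Finset.sum_congr rfl fun p _ => ?_
        ring
    _ ≤ ∑ m ∈ Finset.range n, a m * (∑ l ∈ Finset.range (m+1), z l) := by
        refine Finset.sum_le_sum fun m hm => ?_
        exact mul_le_mul_of_nonneg_left (hyz m (Finset.mem_range.1 hm)) (ha0 m)
    _ = ∑ k ∈ Finset.range n, x k * z k := claim3



private def ext0 (n : ℕ) (w : Fin n → ℝ) : ℕ → ℝ := fun m => if h : m < n then w ⟨m, h⟩ else 0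

private def ext2 (n : ℕ) (Cf : Fin n → Fin n → ℝ) : ℕ → ℕ → ℝ :=
  fun k l => if h : k < n ∧ l < n then Cf ⟨k, h.1⟩ ⟨l, h.2⟩ else 0

private lemma ext0_pos {n m : ℕ} (w : Fin n → ℝ) (hm : m < n) : ext0 n w m = w ⟨m, hm⟩ :=
  dif_pos hm

private lemma fin_range_sum {M : Type*} [AddCommMonoid M] {n : ℕ} (f : Fin n → M) (g : ℕ → M)
    (h : ∀ (m : ℕ) (hm : m < n), g m = f ⟨m, hm⟩) :
    ∑ i, f i = ∑ m ∈ Finset.range n, g m := by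
  rw [← Fin.sum_univ_eq_sum_range g]
  exact Finset.sum_congr rfl fun i _ => ((h i.1 i.2).trans (by congr)).symm

private lemma cut_sum {n : ℕ} (w : Fin n → ℝ) (m : ℕ) (hm : m < n) :
    ∑ l ∈ Finset.range (m+1), ext0 n w l
      = ∑ i ∈ Finset.univ.filter (· ≤ (⟨m, hm⟩ : Fin n)), w i := by
  rw [Finset.sum_filter]
  rw [fin_range_sum (fun i : Fin n => if i ≤ (⟨m, hm⟩ : Fin n) then w i else 0)
    (fun l => if l ≤ m then ext0 n w l else 0)
    (fun l hl => by simp [ext0_pos w hl, Fin.mk_le_mk])]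
  rw [← Finset.sum_filter,
    show (Finset.range n).filter (fun l => l ≤ m) = Finset.range (m+1) from by
      ext l; simp [Finset.mem_range]; omega]

private lemma fin_ineq (n : ℕ) (Cf : Fin n → Fin n → ℝ) (x y z : Fin n → ℝ)
    (hC0 : ∀ k l, 0 ≤ Cf k l)
    (hrow : ∀ k, ∑ l, Cf k l = 1) (hcol : ∀ l, ∑ k, Cf k l = 1)
    (hxa : Antitone x) (hx0 : ∀ i, 0 ≤ x i)
    (hya : Antitone y) (hy0 : ∀ i, 0 ≤ y i)
    (hyz : ∀ k : Fin n, ∑ i ∈ Finset.univ.filter (· ≤ k), y i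
      ≤ ∑ i ∈ Finset.univ.filter (· ≤ k), z i) :
    ∑ k, ∑ l, Cf k l * x k * y l ≤ ∑ i, x i * z i := by
  have hanti : ∀ (w : Fin n → ℝ), Antitone w → (∀ i, 0 ≤ w i) → Antitone (ext0 n w) := by
    intro w hw hw0 m m' hmm'
    by_cases h2 : m' < n
    · have h1 : m < n := lt_of_le_of_lt hmm' h2
      rw [ext0_pos w h1, ext0_pos w h2]
      exact hw (Fin.mk_le_mk.mpr hmm')
    · rw [show ext0 n w m' = 0 from dif_neg h2]
      unfold ext0
      split_ifs with h1
      · exact hw0 _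
      · exact le_rfl
  have E1 : ∑ k, ∑ l, Cf k l * x k * y l
      = ∑ k ∈ Finset.range n, ∑ l ∈ Finset.range n,
          ext2 n Cf k l * ext0 n x k * ext0 n y l := by
    refine fin_range_sum _ _ fun m hm => ?_
    refine (fin_range_sum (fun l : Fin n => Cf ⟨m, hm⟩ l * x ⟨m, hm⟩ * y l) _
      fun p hp => ?_).symm
    rw [ext0_pos x hm, ext0_pos y hp,
      show ext2 n Cf m p = Cf ⟨m, hm⟩ ⟨p, hp⟩ from dif_pos ⟨hm, hp⟩]
  have E2 : ∑ k ∈ Finset.range n, ext0 n x k * ext0 n z k = ∑ i, x i * z i := by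
    refine (fin_range_sum _ _ fun m hm => ?_).symm
    rw [ext0_pos x hm, ext0_pos z hm]
  rw [E1, ← E2]
  refine core_ineq n (ext2 n Cf) (ext0 n x) (ext0 n y) (ext0 n z) ?_ ?_ ?_ ?_ ?_ ?_ ?_ ?_
  · intro k l
    unfold ext2
    split_ifs with h
    · exact hC0 _ _
    · exact le_rfl
  · intro k hk
    have : ∑ l ∈ Finset.range n, ext2 n Cf k l = ∑ j : Fin n, Cf ⟨k, hk⟩ j :=
      (fin_range_sum _ _ fun p hp =>
        show ext2 n Cf k p = Cf ⟨k, hk⟩ ⟨p, hp⟩ from dif_pos ⟨hk, hp⟩).symm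
    rw [this, hrow]
  · intro l hl
    have : ∑ k ∈ Finset.range n, ext2 n Cf k l = ∑ i : Fin n, Cf i ⟨l, hl⟩ :=
      (fin_range_sum _ _ fun m hm =>
        show ext2 n Cf m l = Cf ⟨m, hm⟩ ⟨l, hl⟩ from dif_pos ⟨hm, hl⟩).symm
    rw [this, hcol]
  · exact hanti x hxa hx0
  · exact dif_neg (lt_irrefl n)
  · exact hanti y hya hy0
  · exact dif_neg (lt_irrefl n)
  · intro m hm
    rw [cut_sum y m hm, cut_sum z m hm]
    exact hyz ⟨m, hm⟩

private theorem trace_re_eq (n : ℕ) (X Y : Matrix (Fin n) (Fin n) ℂ)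
    (hX : X.PosSemidef) (hY : Y.PosSemidef)
    (x y : Fin n → ℝ)
    (σ τ : Equiv.Perm (Fin n)) (hσ : x = hX.1.eigenvalues ∘ σ) (hτ : y = hY.1.eigenvalues ∘ τ) :
    (Matrix.trace (X * Y)).re = ∑ k : Fin n, ∑ l : Fin n,
      Complex.normSq ((star (hX.1.eigenvectorUnitary : Matrix (Fin n) (Fin n) ℂ)
        * (hY.1.eigenvectorUnitary : Matrix (Fin n) (Fin n) ℂ)) (σ k) (τ l)) * x k * y l := by
  set ξ := hX.1.eigenvalues with hξ
  set η := hY.1.eigenvalues with hη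
  set Vm : Matrix (Fin n) (Fin n) ℂ := (hX.1.eigenvectorUnitary : Matrix (Fin n) (Fin n) ℂ) with hVm
  set Wm : Matrix (Fin n) (Fin n) ℂ := (hY.1.eigenvectorUnitary : Matrix (Fin n) (Fin n) ℂ) with hWm
  set N : Matrix (Fin n) (Fin n) ℂ := star Vm * Wm with hNdef
  have hXij : ∀ i j, X i j = ∑ k, Vm i k * (ξ k : ℂ) * star (Vm j k) := by
    intro i j
    conv_lhs => rw [hX.1.spectral_theorem, Unitary.conjStarAlgAut_apply]
    rw [Matrix.mul_apply]
    refine Finset.sum_congr rfl fun t _ => ?_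
    rw [Matrix.mul_diagonal, Matrix.star_apply]
    rfl
  have hYij : ∀ i j, Y i j = ∑ l, Wm i l * (η l : ℂ) * star (Wm j l) := by
    intro i j
    conv_lhs => rw [hY.1.spectral_theorem, Unitary.conjStarAlgAut_apply]
    rw [Matrix.mul_apply]
    refine Finset.sum_congr rfl fun t _ => ?_
    rw [Matrix.mul_diagonal, Matrix.star_apply]
    rfl
  have key : Matrix.trace (X * Y) = ∑ k, ∑ l, (ξ k : ℂ) * (η l : ℂ) * (star (N k l) * N k l) := by
    calc Matrix.trace (X * Y) = ∑ i, ∑ j, X i j * Y j i := by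
          simp [Matrix.trace, Matrix.diag, Matrix.mul_apply]
      _ = ∑ i, ∑ j, ∑ k, ∑ l, (Vm i k * (ξ k : ℂ) * star (Vm j k))
            * (Wm j l * (η l : ℂ) * star (Wm i l)) := by
          refine Finset.sum_congr rfl fun i _ => Finset.sum_congr rfl fun j _ => ?_
          rw [hXij i j, hYij j i, Finset.sum_mul_sum]
      _ = ∑ k, ∑ l, ∑ i, ∑ j, (Vm i k * (ξ k : ℂ) * star (Vm j k))
            * (Wm j l * (η l : ℂ) * star (Wm i l)) :=
          sum4_comm Finset.univ (fun k l i j =>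
            (Vm i k * (ξ k : ℂ) * star (Vm j k)) * (Wm j l * (η l : ℂ) * star (Wm i l)))
      _ = ∑ k, ∑ l, (ξ k : ℂ) * (η l : ℂ) * (star (N k l) * N k l) := by
          refine Finset.sum_congr rfl fun k _ => Finset.sum_congr rfl fun l _ => ?_
          have hNval : N k l = ∑ j, star (Vm j k) * Wm j l := by
            rw [hNdef, Matrix.mul_apply]
            exact Finset.sum_congr rfl fun j _ => by rw [Matrix.star_apply]
          have hNs : star (N k l) = ∑ i, Vm i k * star (Wm i l) := by
            rw [hNval, star_sum]
            exact Finset.sum_congr rfl fun i _ => by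
              rw [star_mul', star_star]
          calc ∑ i, ∑ j, (Vm i k * (ξ k : ℂ) * star (Vm j k)) * (Wm j l * (η l : ℂ) * star (Wm i l))
              = ∑ i, ∑ j, ((ξ k : ℂ) * (η l : ℂ) * (Vm i k * star (Wm i l)))
                  * (star (Vm j k) * Wm j l) := by
                refine Finset.sum_congr rfl fun i _ => Finset.sum_congr rfl fun j _ => ?_
                ring
            _ = (∑ i, (ξ k : ℂ) * (η l : ℂ) * (Vm i k * star (Wm i l)))
                  * (∑ j, star (Vm j k) * Wm j l) := (Finset.sum_mul_sum _ _ _ _).symm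
            _ = (ξ k : ℂ) * (η l : ℂ) * (star (N k l) * N k l) := by
                rw [← Finset.mul_sum, ← hNs, ← hNval]; ring
  have key2 : (Matrix.trace (X * Y)).re = ∑ k, ∑ l, ξ k * η l * Complex.normSq (N k l) := by
    rw [key, Complex.re_sum]
    refine Finset.sum_congr rfl fun k _ => ?_
    rw [Complex.re_sum]
    refine Finset.sum_congr rfl fun l _ => ?_
    rw [Complex.star_def, mul_comm ((starRingEnd ℂ) (N k l)) (N k l), Complex.mul_conj,
      ← Complex.ofReal_mul, ← Complex.ofReal_mul, Complex.ofReal_re]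
  rw [key2]
  rw [← Equiv.sum_comp σ (fun k => ∑ l, ξ k * η l * Complex.normSq (N k l))]
  refine Finset.sum_congr rfl fun k _ => ?_
  rw [← Equiv.sum_comp τ (fun l => ξ (σ k) * η l * Complex.normSq (N (σ k) l))]
  refine Finset.sum_congr rfl fun l _ => ?_
  rw [hσ, hτ]
  simp only [Function.comp_apply]
  ring

private lemma rowsum_one {n : ℕ} (N : Matrix (Fin n) (Fin n) ℂ) (h : N * star N = 1)
    (i : Fin n) : ∑ j, Complex.normSq (N i j) = 1 := by
  have h2 := congrArg (fun M : Matrix (Fin n) (Fin n) ℂ => M i i) h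
  simp only [Matrix.mul_apply, Matrix.star_apply, Matrix.one_apply_eq] at h2
  have : ((∑ j, Complex.normSq (N i j) : ℝ) : ℂ) = 1 := by
    push_cast
    rw [← h2]
    refine Finset.sum_congr rfl fun j _ => ?_
    rw [Complex.star_def, Complex.mul_conj]
  exact_mod_cast this

/-- If the decreasing eigenvalue sequence `y` of `Y` is weakly sub-majorized by the
decreasing diagonal `z` of the diagonal matrix `Z`, then
`trace (X * Y) ≤ trace (X↓ * Z)` where `X↓ = diagonal x` is the Fock rearrangement of
`X`. -/
theorem trace_le_of_submajorization (n : ℕ) (X Y : Matrix (Fin n) (Fin n) ℂ)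
    (hX : X.PosSemidef) (hY : Y.PosSemidef)
    (x y z : Fin n → ℝ)
    (hxa : Antitone x) (hya : Antitone y) (hza : Antitone z) (hz0 : ∀ i, 0 ≤ z i)
    (hxs : ∃ σ : Equiv.Perm (Fin n), x = hX.1.eigenvalues ∘ σ)
    (hys : ∃ σ : Equiv.Perm (Fin n), y = hY.1.eigenvalues ∘ σ)
    (hyz : ∀ k : Fin n, ∑ i ∈ Finset.univ.filter (· ≤ k), y i
      ≤ ∑ i ∈ Finset.univ.filter (· ≤ k), z i) :
    (Matrix.trace (X * Y)).re ≤
      (Matrix.trace (Matrix.diagonal (fun i => (x i : ℂ))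
        * Matrix.diagonal (fun i => (z i : ℂ)))).re := by
  obtain ⟨σ, hσ⟩ := hxs
  obtain ⟨τ, hτ⟩ := hys
  set Vm : Matrix (Fin n) (Fin n) ℂ := (hX.1.eigenvectorUnitary : Matrix (Fin n) (Fin n) ℂ)
    with hVm
  set Wm : Matrix (Fin n) (Fin n) ℂ := (hY.1.eigenvectorUnitary : Matrix (Fin n) (Fin n) ℂ)
    with hWm
  set N : Matrix (Fin n) (Fin n) ℂ := star Vm * Wm with hNdef
  have hV1 : Vm * star Vm = 1 := Matrix.mem_unitaryGroup_iff.mp hX.1.eigenvectorUnitary.2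
  have hV2 : star Vm * Vm = 1 := Matrix.mem_unitaryGroup_iff'.mp hX.1.eigenvectorUnitary.2
  have hW1 : Wm * star Wm = 1 := Matrix.mem_unitaryGroup_iff.mp hY.1.eigenvectorUnitary.2
  have hW2 : star Wm * Wm = 1 := Matrix.mem_unitaryGroup_iff'.mp hY.1.eigenvectorUnitary.2
  have hN1 : N * star N = 1 := by
    rw [hNdef, StarMul.star_mul, star_star, mul_assoc, ← mul_assoc Wm, hW1, one_mul, hV2]
  have hN2 : star N * N = 1 := by
    rw [hNdef, StarMul.star_mul, star_star, mul_assoc, ← mul_assoc Vm, hV1, one_mul, hW2]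
  have hrowN : ∀ i, ∑ j, Complex.normSq (N i j) = 1 := rowsum_one N hN1
  have hcolN : ∀ j, ∑ i, Complex.normSq (N i j) = 1 := by
    intro j
    have := rowsum_one (star N) (by rw [star_star]; exact hN2) j
    simpa [Matrix.star_apply, Complex.normSq_conj] using this
  have hx0 : ∀ i, 0 ≤ x i := by
    intro i; rw [hσ]; exact hX.eigenvalues_nonneg (σ i)
  have hy0 : ∀ i, 0 ≤ y i := by
    intro i; rw [hτ]; exact hY.eigenvalues_nonneg (τ i)
  rw [trace_re_eq n X Y hX hY x y σ τ hσ hτ]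
  have hrhs : (Matrix.trace (Matrix.diagonal (fun i => (x i : ℂ))
      * Matrix.diagonal (fun i => (z i : ℂ)))).re = ∑ i, x i * z i := by
    rw [Matrix.diagonal_mul_diagonal, Matrix.trace_diagonal, Complex.re_sum]
    exact Finset.sum_congr rfl fun i _ => by rw [← Complex.ofReal_mul, Complex.ofReal_re]
  rw [hrhs]
  refine fin_ineq n (fun k l => Complex.normSq (N (σ k) (τ l))) x y z
    (fun k l => Complex.normSq_nonneg _) ?_ ?_ hxa hx0 hya hy0 hyz
  · intro k
    rw [Equiv.sum_comp τ (fun j => Complex.normSq (N (σ k) j))]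
    exact hrowN (σ k)
  · intro l
    rw [Equiv.sum_comp σ (fun i => Complex.normSq (N i (τ l)))]
    exact hcolN (τ l)
end

section
/- A positive semidefinite Hermitian n×n matrix X is diagonal in the standard basis with decreasing diagonal entries if and only if for every orthogonal projection P, trace(P·X) ≤ trace(P↓·X), where P↓ is the projection onto the span of the first rank(P) standard basis vectors. -/
open ComplexOrder Matrix

section Helpers

lemma sum_range_ite_lt {M : Type*} [AddCommMonoid M] {n r : ℕ} (hr : r ≤ n) (f : ℕ → M) :
    ∑ k ∈ Finset.range n, (if k < r then f k else 0) = ∑ k ∈ Finset.range r, f k := by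
  rw [← Finset.sum_filter]
  congr 1
  ext k
  simp only [Finset.mem_filter, Finset.mem_range]
  omega

lemma fin_sum_boole_lt {M : Type*} [NonAssocSemiring M] {n : ℕ} (r : ℕ) (hr : r ≤ n) :
    ∑ i : Fin n, (if (i:ℕ) < r then (1:M) else 0) = (r : M) := by
  rw [Fin.sum_univ_eq_sum_range (fun k => if k < r then (1:M) else 0) n,
    sum_range_ite_lt hr, Finset.sum_const, Finset.card_range, nsmul_eq_mul, mul_one]

lemma proj_psd {n : ℕ} {P : Matrix (Fin n) (Fin n) ℂ} (hH : P.IsHermitian) (hI : P * P = P) :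
    P.PosSemidef := by
  have h := Matrix.posSemidef_conjTranspose_mul_self P
  rwa [hH.eq, hI] at h

lemma psd_diag_re_nonneg {n : ℕ} {M : Matrix (Fin n) (Fin n) ℂ} (hM : M.PosSemidef) (i : Fin n) :
    0 ≤ (M i i).re := by
  have := hM.re_dotProduct_nonneg (Pi.single i 1)
  simpa [dotProduct, Matrix.mulVec_single, Pi.single_apply] using this

lemma trace_eq_rank_proj {n : ℕ} {P : Matrix (Fin n) (Fin n) ℂ}
    (hH : P.IsHermitian) (hI : P * P = P) : ((P.rank : ℂ)) = Matrix.trace P := by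
  classical
  set U : Matrix (Fin n) (Fin n) ℂ :=
    (Matrix.IsHermitian.eigenvectorUnitary hH : Matrix (Fin n) (Fin n) ℂ) with hUdef
  have hU : U * star U = 1 :=
    Matrix.mem_unitaryGroup_iff.mp (Matrix.IsHermitian.eigenvectorUnitary hH).2
  have hU' : star U * U = 1 :=
    Matrix.mem_unitaryGroup_iff'.mp (Matrix.IsHermitian.eigenvectorUnitary hH).2
  have h1 := hH.conjStarAlgAut_star_eigenvectorUnitary
  simp only [Unitary.conjStarAlgAut_star_apply, Unitary.coe_star] at h1
  rw [← hUdef] at h1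
  have h2 : (star U * P * U) * (star U * P * U) = star U * P * U := by
    calc (star U * P * U) * (star U * P * U)
        = star U * P * (U * star U) * P * U := by simp only [Matrix.mul_assoc]
      _ = star U * P * P * U := by rw [hU, Matrix.mul_one]
      _ = star U * (P * P) * U := by simp only [Matrix.mul_assoc]
      _ = star U * P * U := by rw [hI]
  rw [h1, Matrix.diagonal_mul_diagonal] at h2
  have hμ : ∀ i, hH.eigenvalues i = 0 ∨ hH.eigenvalues i = 1 := by
    intro i
    have h3 := congrFun (congrFun (congrArg (fun M => (M : Matrix (Fin n) (Fin n) ℂ)) h2) i) i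
    simp only [Matrix.diagonal_apply_eq, Function.comp, Pi.mul_apply] at h3
    have h4 : hH.eigenvalues i * hH.eigenvalues i = hH.eigenvalues i := by
      exact_mod_cast h3
    rcases mul_eq_zero.mp
        (by nlinarith [h4] : hH.eigenvalues i * (hH.eigenvalues i - 1) = 0) with h | h
    · left; exact h
    · right; linarith
  have htrace : Matrix.trace P = ∑ i, (hH.eigenvalues i : ℂ) := by
    conv_lhs => rw [hH.spectral_theorem, Unitary.conjStarAlgAut_apply]
    rw [Matrix.trace_mul_cycle, ← hUdef, hU', Matrix.one_mul, Matrix.trace_diagonal]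
    rfl
  rw [hH.rank_eq_card_non_zero_eigs, htrace, Fintype.card_subtype, Finset.card_filter,
    Nat.cast_sum]
  refine Finset.sum_congr rfl fun i _ => ?_
  rcases hμ i with h | h <;> simp [h]

lemma key_sum {n r : ℕ} (d p : Fin n → ℝ) (hd : Antitone d) (hd0 : ∀ i, 0 ≤ d i)
    (hp0 : ∀ i, 0 ≤ p i) (hp1 : ∀ i, p i ≤ 1) (hsum : ∑ i, p i = (r:ℝ)) :
    ∑ i, p i * d i ≤ ∑ i : Fin n, (if (i:ℕ) < r then d i else 0) := by
  by_cases hr : r < n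
  · set c := d ⟨r, hr⟩ with hc
    have hχ : ∑ i : Fin n, (if (i:ℕ) < r then (1:ℝ) else 0) = (r:ℝ) := fin_sum_boole_lt r hr.le
    have key : ∀ i : Fin n, p i * d i - (if (i:ℕ) < r then d i else 0) ≤
        (p i - (if (i:ℕ) < r then (1:ℝ) else 0)) * c := by
      intro i
      by_cases h : (i:ℕ) < r
      · simp only [if_pos h]
        have hdi : c ≤ d i := hd (by rw [Fin.le_def]; simpa using h.le)
        nlinarith [mul_nonneg (sub_nonneg.2 hdi) (sub_nonneg.2 (hp1 i))]
      · simp only [if_neg h]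
        have hdi : d i ≤ c := hd (by rw [Fin.le_def]; simpa using not_lt.mp h)
        nlinarith [mul_nonneg (hp0 i) (sub_nonneg.2 hdi)]
    have h2 := Finset.sum_le_sum (fun i (_ : i ∈ Finset.univ) => key i)
    rw [Finset.sum_sub_distrib, ← Finset.sum_mul, Finset.sum_sub_distrib, hsum, hχ,
      sub_self, zero_mul] at h2
    linarith
  · push_neg at hr
    calc ∑ i, p i * d i ≤ ∑ i, d i :=
          Finset.sum_le_sum fun i _ => mul_le_of_le_one_left (hd0 i) (hp1 i)
      _ = _ := by
          refine Finset.sum_congr rfl fun i _ => ?_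
          rw [if_pos (lt_of_lt_of_le i.isLt hr)]

lemma double_ite_sum {n : ℕ} (i j : Fin n) (α β γ δ : ℂ) (f : Fin n → Fin n → ℂ) :
    ∑ k : Fin n, ∑ m : Fin n,
      ((if k = i then α else 0) + (if k = j then β else 0)) *
        ((if m = i then γ else 0) + (if m = j then δ else 0)) * f k m
    = α*γ*f i i + α*δ*f i j + β*γ*f j i + β*δ*f j j := by
  simp only [add_mul, mul_add, ite_mul, mul_ite, zero_mul, mul_zero, zero_add, add_zero,
    Finset.sum_add_distrib, Finset.sum_ite_eq, Finset.sum_ite_eq', Finset.mem_univ, if_true]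
  ring

lemma ite_lt_succ_split {n : ℕ} (k i : Fin n) {M : Type*} [AddZeroClass M] (x : M) :
    (if (k:ℕ) < (i:ℕ)+1 then x else 0)
      = (if (k:ℕ) < (i:ℕ) then x else 0) + (if k = i then x else 0) := by
  by_cases h : k = i
  · subst h
    rw [if_pos (Nat.lt_succ_self _), if_neg (lt_irrefl _), if_pos rfl, zero_add]
  · have hne : (k:ℕ) ≠ (i:ℕ) := fun hh => h (Fin.ext hh)
    rw [if_neg h, add_zero]
    by_cases h2 : (k:ℕ) < (i:ℕ)
    · rw [if_pos h2, if_pos (by omega)]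
    · rw [if_neg h2, if_neg (by omega)]

lemma ite_or_split {n : ℕ} (k i j : Fin n) (hij : (i:ℕ) < (j:ℕ)) {M : Type*} [AddZeroClass M]
    (x : M) :
    (if (k:ℕ) < (i:ℕ) ∨ k = j then x else 0)
      = (if (k:ℕ) < (i:ℕ) then x else 0) + (if k = j then x else 0) := by
  by_cases h1 : (k:ℕ) < (i:ℕ)
  · rw [if_pos (Or.inl h1), if_pos h1, if_neg, add_zero]
    intro hh
    subst hh
    omega
  · by_cases h2 : k = j
    · rw [if_pos (Or.inr h2), if_neg h1, if_pos h2, zero_add]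
    · rw [if_neg (by tauto), if_neg h1, if_neg h2, add_zero]

/-- Trace of (diagonal indicator) * X, when the diagonal of X is real. -/
lemma trace_indicator_mul {n : ℕ} (X : Matrix (Fin n) (Fin n) ℂ) (w : Fin n → Prop)
    [DecidablePred w] (d : Fin n → ℝ) (hreal : ∀ k, X k k = (d k : ℂ)) :
    (Matrix.trace (Matrix.diagonal (fun k : Fin n => if w k then (1:ℂ) else 0) * X)).re
      = ∑ k : Fin n, (if w k then d k else 0) := by
  simp only [Matrix.trace, Matrix.diag, Matrix.diagonal_mul, Complex.re_sum]
  refine Finset.sum_congr rfl fun k _ => ?_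
  rw [hreal k]
  by_cases h : w k <;> simp [h]

end Helpers

set_option maxHeartbeats 1600000

/-- Characterization of passive matrices: a positive semidefinite Hermitian matrix `X`
is diagonal in the standard basis with decreasing diagonal entries iff for every
orthogonal projection `P`, `trace (P * X) ≤ trace (P↓ * X)`, where `P↓` projects onto
the first `rank P` standard basis vectors. -/
theorem passive_iff_projection_criterion (n : ℕ) (X : Matrix (Fin n) (Fin n) ℂ)
    (hX : X.PosSemidef) :
    (∃ d : Fin n → ℝ, Antitone d ∧ X = Matrix.diagonal (fun i => (d i : ℂ))) ↔
      ∀ P : Matrix (Fin n) (Fin n) ℂ, P.IsHermitian → P * P = P →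
        (Matrix.trace (P * X)).re ≤
          (Matrix.trace (Matrix.diagonal
            (fun i : Fin n => if (i : ℕ) < P.rank then (1 : ℂ) else 0) * X)).re := by
  constructor
  · rintro ⟨d, hanti, rfl⟩ P hPH hPP
    have hd0 : ∀ i, 0 ≤ d i := by
      intro i
      have h := (Matrix.posSemidef_diagonal_iff).mp hX i
      exact_mod_cast h
    have hPsd := proj_psd hPH hPP
    have hp0 : ∀ i, 0 ≤ (P i i).re := fun i => psd_diag_re_nonneg hPsd i
    have hQH : (1 - P).IsHermitian := Matrix.isHermitian_one.sub hPH
    have hQI : (1 - P) * (1 - P) = 1 - P := by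
      rw [Matrix.sub_mul, Matrix.one_mul, Matrix.mul_sub, Matrix.mul_one, hPP]
      abel
    have hp1 : ∀ i, (P i i).re ≤ 1 := by
      intro i
      have h := psd_diag_re_nonneg (proj_psd hQH hQI) i
      simp only [Matrix.sub_apply, Matrix.one_apply_eq, Complex.sub_re, Complex.one_re] at h
      linarith
    have hsum : ∑ i : Fin n, (P i i).re = (P.rank : ℝ) := by
      have h2 := congrArg Complex.re (trace_eq_rank_proj hPH hPP).symm
      simpa [Matrix.trace, Matrix.diag, Complex.re_sum] using h2
    have hL : (Matrix.trace (P * Matrix.diagonal (fun i => (d i : ℂ)))).re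
        = ∑ i : Fin n, (P i i).re * d i := by
      simp [Matrix.trace, Matrix.diag, Matrix.mul_diagonal, Complex.re_sum, Complex.mul_re]
    have hR : (Matrix.trace (Matrix.diagonal
        (fun i : Fin n => if (i : ℕ) < P.rank then (1 : ℂ) else 0) *
          Matrix.diagonal (fun i => (d i : ℂ)))).re
        = ∑ i : Fin n, (if (i:ℕ) < P.rank then d i else 0) :=
      trace_indicator_mul _ _ d (fun k => by simp)
    rw [hL, hR]
    exact key_sum d (fun i => (P i i).re) hanti hd0 hp0 hp1 hsum
  · intro h
    have hXH : X.IsHermitian := hX.isHermitian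
    set d : Fin n → ℝ := fun k => (X k k).re with hd
    have hreal : ∀ k, X k k = (d k : ℂ) := by
      intro k
      have him := congrArg Complex.im (hXH.apply k k)
      simp only [Complex.star_def, Complex.conj_im] at him
      apply Complex.ext
      · simp [hd]
      · simp only [Complex.ofReal_im]
        linarith
    -- Step B : the diagonal is antitone
    have hmono : Antitone d := by
      intro a b hab
      rcases eq_or_lt_of_le hab with rfl | hlt
      · exact le_refl _
      have hvallt : (a:ℕ) < (b:ℕ) := hlt
      set w : Fin n → ℂ := fun k => if (k:ℕ) < (a:ℕ) ∨ k = b then 1 else 0 with hw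
      have hwvals : ∀ k, w k = (if (k:ℕ) < (a:ℕ) then (1:ℂ) else 0) + (if k = b then 1 else 0) :=
        fun k => ite_or_split k a b hvallt 1
      have hwstar : star w = w := by
        funext k
        simp only [Pi.star_apply, hw]
        split <;> simp
      have hwmul : (fun k => w k * w k) = w := by
        funext k
        simp only [hw]
        split <;> simp
      have hPH : (Matrix.diagonal w).IsHermitian := by
        rw [Matrix.IsHermitian, Matrix.diagonal_conjTranspose, hwstar]
      have hPP : Matrix.diagonal w * Matrix.diagonal w = Matrix.diagonal w := by
        rw [Matrix.diagonal_mul_diagonal, hwmul]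
      have htr : Matrix.trace (Matrix.diagonal w) = (((a:ℕ) + 1 : ℕ) : ℂ) := by
        rw [Matrix.trace_diagonal]
        calc ∑ k, w k = ∑ k : Fin n,
            ((if (k:ℕ) < (a:ℕ) then (1:ℂ) else 0) + (if k = b then 1 else 0)) :=
              Finset.sum_congr rfl fun k _ => hwvals k
          _ = (((a:ℕ):ℂ)) + 1 := by
              rw [Finset.sum_add_distrib, fin_sum_boole_lt (a:ℕ) a.isLt.le,
                Finset.sum_ite_eq' Finset.univ b (fun _ => (1:ℂ))]
              simp
          _ = _ := by push_cast; ring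
      have hrank : (Matrix.diagonal w).rank = (a:ℕ) + 1 := by
        have h1 := trace_eq_rank_proj hPH hPP
        rw [htr] at h1
        exact_mod_cast h1
      have hineq := h (Matrix.diagonal w) hPH hPP
      rw [hrank] at hineq
      have hLHS : (Matrix.trace (Matrix.diagonal w * X)).re
          = (∑ k : Fin n, (if (k:ℕ) < (a:ℕ) then d k else 0)) + d b := by
        have := trace_indicator_mul X (fun k => (k:ℕ) < (a:ℕ) ∨ k = b) d hreal
        rw [show Matrix.diagonal w =
          Matrix.diagonal (fun k : Fin n => if (k:ℕ) < (a:ℕ) ∨ k = b then (1:ℂ) else 0) from rfl,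
          this]
        rw [Finset.sum_congr rfl (fun k (_ : k ∈ Finset.univ) => ite_or_split k a b hvallt (d k)),
          Finset.sum_add_distrib, Finset.sum_ite_eq' Finset.univ b (fun k => d k)]
        simp
      have hRHS : (Matrix.trace (Matrix.diagonal
          (fun k : Fin n => if (k:ℕ) < (a:ℕ) + 1 then (1:ℂ) else 0) * X)).re
          = (∑ k : Fin n, (if (k:ℕ) < (a:ℕ) then d k else 0)) + d a := by
        rw [trace_indicator_mul X (fun k => (k:ℕ) < (a:ℕ) + 1) d hreal]
        rw [Finset.sum_congr rfl (fun k (_ : k ∈ Finset.univ) => ite_lt_succ_split k a (d k)),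
          Finset.sum_add_distrib, Finset.sum_ite_eq' Finset.univ a (fun k => d k)]
        simp
      rw [hLHS, hRHS] at hineq
      linarith
    -- Step C : the off-diagonal entries vanish
    have hoff : ∀ i j : Fin n, i < j → X i j = 0 := by
      intro i j hij
      by_contra hc
      have hvallt : (i:ℕ) < (j:ℕ) := hij
      set c : ℂ := X i j with hcdef
      set ca : ℝ := ‖c‖ with hca
      have hca0 : 0 < ca := by simpa [hca] using (norm_pos_iff.mpr hc)
      set Mm : ℝ := d i - d j with hMm
      have hM0 : 0 ≤ Mm := sub_nonneg.2 (hmono hij.le)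
      set s : ℝ := min (1/2) (ca / (Mm + 1)) with hs
      have hs0 : 0 < s := lt_min (by norm_num) (div_pos hca0 (by linarith))
      have hs2 : s ≤ 1/2 := min_le_left _ _
      have hsM : s * (Mm + 1) ≤ ca := by
        have := min_le_right (1/2) (ca / (Mm + 1))
        rw [hs]
        calc min (1/2) (ca / (Mm+1)) * (Mm+1) ≤ (ca / (Mm+1)) * (Mm+1) := by
              apply mul_le_mul_of_nonneg_right this (by linarith)
          _ = ca := by field_simp
      set a : ℝ := Real.sqrt (1 - s^2) with ha
      have ha2 : a^2 = 1 - s^2 := Real.sq_sqrt (by nlinarith)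
      have ha0 : 0 ≤ a := Real.sqrt_nonneg _
      have ha1 : 1/2 < a := by nlinarith
      set α : ℂ := (a : ℂ) with hα
      set β : ℂ := (s : ℂ) * ((starRingEnd ℂ) c / (ca : ℂ)) with hβ
      have hcane : (ca : ℂ) ≠ 0 := by exact_mod_cast hca0.ne'
      have hcconj : c * (starRingEnd ℂ) c = ((ca:ℂ)^2) := by
        rw [Complex.mul_conj, hca]
        push_cast [Complex.normSq_eq_norm_sq]
        ring
      have hconjc : (starRingEnd ℂ) c = (ca:ℂ)^2 / c := by
        field_simp
        linear_combination hcconj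
      set v : Fin n → ℂ := fun k => (if k = i then α else 0) + (if k = j then β else 0) with hv
      have hv0 : ∀ k : Fin n, (k:ℕ) < (i:ℕ) → v k = 0 := by
        intro k hk
        have hki : k ≠ i := fun e => by subst e; omega
        have hkj : k ≠ j := fun e => by subst e; omega
        simp [hv, hki, hkj]
      set Q : Matrix (Fin n) (Fin n) ℂ :=
        Matrix.diagonal (fun k : Fin n => if (k:ℕ) < (i:ℕ) then (1:ℂ) else 0) with hQ
      set R : Matrix (Fin n) (Fin n) ℂ :=
        Matrix.of (fun k l => v k * (starRingEnd ℂ) (v l)) with hR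
      have hRapp : ∀ k l, R k l = v k * (starRingEnd ℂ) (v l) := fun k l => rfl
      have hQH : Q.IsHermitian := by
        rw [hQ, Matrix.IsHermitian, Matrix.diagonal_conjTranspose,
          show star (fun k : Fin n => if (k:ℕ) < (i:ℕ) then (1:ℂ) else 0)
            = (fun k : Fin n => if (k:ℕ) < (i:ℕ) then (1:ℂ) else 0) by
              funext k; simp only [Pi.star_apply]; split <;> simp]
      have hRH : R.IsHermitian := by
        rw [Matrix.IsHermitian]
        ext k l
        simp only [Matrix.conjTranspose_apply, hRapp, star_mul', Complex.star_def,
          Complex.conj_conj]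
        ring
      have hPH : (Q + R).IsHermitian := hQH.add hRH
      have hβsq : (starRingEnd ℂ) β * β = ((s^2 : ℝ) : ℂ) := by
        rw [hβ, _root_.map_mul, map_div₀, Complex.conj_conj, Complex.conj_ofReal,
          Complex.conj_ofReal]
        push_cast
        field_simp
        linear_combination hcconj
      have hαsq : (starRingEnd ℂ) α * α = ((a^2 : ℝ) : ℂ) := by
        rw [hα, Complex.conj_ofReal]
        push_cast
        ring
      have hnorm : ∑ m : Fin n, (starRingEnd ℂ) (v m) * v m = 1 := by
        have hptwise : ∀ m : Fin n, (starRingEnd ℂ) (v m) * v m =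
            (if m = i then (starRingEnd ℂ) α * α else 0) +
              (if m = j then (starRingEnd ℂ) β * β else 0) := by
          intro m
          by_cases h1 : m = i
          · subst h1
            simp [hv, hij.ne]
          · by_cases h2 : m = j <;> simp [hv, h1, h2, hij.ne']
        rw [Finset.sum_congr rfl (fun m _ => hptwise m), Finset.sum_add_distrib,
          Finset.sum_ite_eq' Finset.univ i, Finset.sum_ite_eq' Finset.univ j]
        simp only [Finset.mem_univ, if_true]
        rw [hαsq, hβsq, ← Complex.ofReal_add,
          show a^2 + s^2 = 1 by rw [ha2]; ring]
        norm_num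
      have hQQ : Q * Q = Q := by
        rw [hQ, Matrix.diagonal_mul_diagonal,
          show (fun k : Fin n => (if (k:ℕ) < (i:ℕ) then (1:ℂ) else 0)
              * (if (k:ℕ) < (i:ℕ) then (1:ℂ) else 0))
            = (fun k : Fin n => if (k:ℕ) < (i:ℕ) then (1:ℂ) else 0) by
              funext k; split <;> simp]
      have hQR : Q * R = 0 := by
        ext k l
        rw [hQ, Matrix.diagonal_mul]
        by_cases hk : (k:ℕ) < (i:ℕ)
        · rw [hRapp, hv0 k hk]
          simp
        · simp [hk]
      have hRQ : R * Q = 0 := by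
        ext k l
        rw [hQ, Matrix.mul_diagonal]
        by_cases hl : (l:ℕ) < (i:ℕ)
        · rw [hRapp, hv0 l hl]
          simp
        · simp [hl]
      have hRR : R * R = R := by
        ext k l
        rw [Matrix.mul_apply]
        calc ∑ m, R k m * R m l = ∑ m, (v k * (starRingEnd ℂ) (v l)) *
              ((starRingEnd ℂ) (v m) * v m) := by
              refine Finset.sum_congr rfl fun m _ => ?_
              rw [hRapp, hRapp]
              ring
          _ = R k l := by
              rw [← Finset.mul_sum, hnorm, mul_one, hRapp]
      have hPP : (Q + R) * (Q + R) = Q + R := by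
        rw [add_mul, mul_add, mul_add, hQQ, hQR, hRQ, hRR, add_zero, zero_add]
      have htrR : Matrix.trace R = 1 := by
        rw [Matrix.trace]
        calc ∑ k, R.diag k = ∑ k, (starRingEnd ℂ) (v k) * v k := by
              refine Finset.sum_congr rfl fun k _ => ?_
              rw [Matrix.diag_apply, hRapp]
              ring
          _ = 1 := hnorm
      have htrQ : Matrix.trace Q = (((i:ℕ)) : ℂ) := by
        rw [hQ, Matrix.trace_diagonal]
        exact fin_sum_boole_lt (i:ℕ) i.isLt.le
      have htrP : Matrix.trace (Q + R) = (((i:ℕ) + 1 : ℕ) : ℂ) := by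
        rw [Matrix.trace_add, htrQ, htrR]
        push_cast
        ring
      have hrank : (Q + R).rank = (i:ℕ) + 1 := by
        have h1 := trace_eq_rank_proj hPH hPP
        rw [htrP] at h1
        exact_mod_cast h1
      have hineq := h (Q + R) hPH hPP
      rw [hrank] at hineq
      -- compute trace (R * X)
      have htrRX : Matrix.trace (R * X)
          = (starRingEnd ℂ) α * α * X i i + β * (starRingEnd ℂ) α * X i j
              + α * (starRingEnd ℂ) β * X j i + β * (starRingEnd ℂ) β * X j j := by
        rw [Matrix.trace]
        have : ∀ k, (R * X).diag k = ∑ m, v k * (starRingEnd ℂ) (v m) * X m k := by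
          intro k
          rw [Matrix.diag_apply, Matrix.mul_apply]
          exact Finset.sum_congr rfl fun m _ => by rw [hRapp]
        rw [Finset.sum_congr rfl fun k _ => this k]
        have hconjv : ∀ m, (starRingEnd ℂ) (v m) =
            (if m = i then (starRingEnd ℂ) α else 0) + (if m = j then (starRingEnd ℂ) β else 0) := by
          intro m
          rw [hv]
          by_cases h1 : m = i
          · subst h1
            simp [hij.ne]
          · by_cases h2 : m = j
            · subst h2
              simp [hij.ne']
            · simp [h1, h2]
        calc ∑ k, ∑ m, v k * (starRingEnd ℂ) (v m) * X m k
            = ∑ k : Fin n, ∑ m : Fin n,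
              ((if k = i then α else 0) + (if k = j then β else 0)) *
                ((if m = i then (starRingEnd ℂ) α else 0) +
                  (if m = j then (starRingEnd ℂ) β else 0)) * X m k := by
              refine Finset.sum_congr rfl fun k _ => Finset.sum_congr rfl fun m _ => ?_
              rw [← hconjv m, hv]
          _ = _ := by
              rw [double_ite_sum i j α β ((starRingEnd ℂ) α) ((starRingEnd ℂ) β)
                (fun k m => X m k)]
              ring
      have hXji : X j i = (starRingEnd ℂ) c := by
        rw [hcdef, ← hXH.apply j i]
        rfl
      have htrRXval : Matrix.trace (R * X)
          = ((a^2 * d i + s^2 * d j + 2 * a * s * ca : ℝ) : ℂ) := by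
        rw [htrRX, hXji, hreal i, hreal j, ← hcdef, hα, hβ]
        rw [_root_.map_mul, map_div₀, Complex.conj_conj, Complex.conj_ofReal,
          Complex.conj_ofReal, Complex.conj_ofReal, hconjc]
        push_cast
        field_simp
        ring
      have hLHS : (Matrix.trace ((Q + R) * X)).re
          = (∑ k : Fin n, (if (k:ℕ) < (i:ℕ) then d k else 0))
              + (a^2 * d i + s^2 * d j + 2 * a * s * ca) := by
        rw [add_mul, Matrix.trace_add, Complex.add_re, htrRXval]
        rw [hQ, trace_indicator_mul X (fun k => (k:ℕ) < (i:ℕ)) d hreal, Complex.ofReal_re]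
      have hRHS : (Matrix.trace (Matrix.diagonal
          (fun k : Fin n => if (k:ℕ) < (i:ℕ) + 1 then (1:ℂ) else 0) * X)).re
          = (∑ k : Fin n, (if (k:ℕ) < (i:ℕ) then d k else 0)) + d i := by
        rw [trace_indicator_mul X (fun k => (k:ℕ) < (i:ℕ) + 1) d hreal]
        rw [Finset.sum_congr rfl (fun k (_ : k ∈ Finset.univ) => ite_lt_succ_split k i (d k)),
          Finset.sum_add_distrib, Finset.sum_ite_eq' Finset.univ i (fun k => d k)]
        simp
      rw [hLHS, hRHS] at hineq
      -- derive the contradiction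
      have hexp1 : a^2 * d i = d i - s^2 * d i := by rw [ha2]; ring
      have hexp2 : s^2 * Mm = s^2 * d i - s^2 * d j := by rw [hMm]; ring
      have hkey : 2 * a * s * ca ≤ s^2 * Mm := by linarith
      have h1 : s^2 * (Mm + 1) ≤ s * ca := by nlinarith
      nlinarith [mul_pos hs0 hca0]
    refine ⟨d, hmono, ?_⟩
    ext k l
    by_cases hkl : k = l
    · subst hkl
      rw [Matrix.diagonal_apply_eq]
      exact hreal k
    · rw [Matrix.diagonal_apply_ne _ hkl]
      rcases lt_or_gt_of_ne hkl with hlt | hgt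
      · exact hoff k l hlt
      · rw [← hXH.apply k l, hoff l k hgt]
        simp
end

section
/- Let Φ be a linear map on n×n complex matrices that is positive and trace-preserving, and suppose that for all orthogonal projections P, Q one has trace(Q·Φ(P)) ≤ trace(Q↓·Φ(P↓)), where R↓ denotes the projection onto the first rank(R) standard basis vectors. Then for every positive semidefinite X and every projection Q, trace(Q·Φ(X)) ≤ trace(Q↓·Φ(X↓)), where X↓ is the diagonal matrix of eigenvalues of X in decreasing order. -/
open ComplexOrder Matrix

/-- If a positive trace-preserving linear map `Φ` satisfies the projector criterion
`trace (Q Φ(P)) ≤ trace (Q↓ Φ(P↓))` for all orthogonal projections `P`, `Q`, then for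
every positive semidefinite `X` and every projection `Q`,
`trace (Q Φ(X)) ≤ trace (Q↓ Φ(X↓))`, where `X↓` is the diagonal matrix of the
eigenvalues of `X` in decreasing order. -/
theorem projector_criterion_extends (n : ℕ)
    (Φ : Matrix (Fin n) (Fin n) ℂ →ₗ[ℂ] Matrix (Fin n) (Fin n) ℂ)
    (hpos : ∀ X : Matrix (Fin n) (Fin n) ℂ, X.PosSemidef → (Φ X).PosSemidef)
    (htr : ∀ X : Matrix (Fin n) (Fin n) ℂ, Matrix.trace (Φ X) = Matrix.trace X)
    (hproj : ∀ P Q : Matrix (Fin n) (Fin n) ℂ,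
        P.IsHermitian → P * P = P → Q.IsHermitian → Q * Q = Q →
        (Matrix.trace (Q * Φ P)).re ≤
          (Matrix.trace (Matrix.diagonal
              (fun i : Fin n => if (i : ℕ) < Q.rank then (1 : ℂ) else 0) *
            Φ (Matrix.diagonal
              (fun i : Fin n => if (i : ℕ) < P.rank then (1 : ℂ) else 0)))).re) :
    ∀ X : Matrix (Fin n) (Fin n) ℂ, ∀ hX : X.PosSemidef,
      ∀ x : Fin n → ℝ, Antitone x →
        (∃ σ : Equiv.Perm (Fin n), x = hX.1.eigenvalues ∘ σ) →
      ∀ Q : Matrix (Fin n) (Fin n) ℂ, Q.IsHermitian → Q * Q = Q →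
        (Matrix.trace (Q * Φ X)).re ≤
          (Matrix.trace (Matrix.diagonal
              (fun i : Fin n => if (i : ℕ) < Q.rank then (1 : ℂ) else 0) *
            Φ (Matrix.diagonal (fun i => (x i : ℂ))))).re := by
  intro X hX x hxanti hperm Q hQ hQ2
  obtain ⟨σ, hσ⟩ := hperm
  subst hσ
  simp only [Function.comp_apply] at hxanti ⊢
  classical
  set U : Matrix (Fin n) (Fin n) ℂ := (hX.1.eigenvectorUnitary : Matrix (Fin n) (Fin n) ℂ) with hU
  have hUU : Uᴴ * U = 1 := by
    have := hX.1.eigenvectorUnitary.2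
    rw [Unitary.mem_iff] at this
    simpa [star_eq_conjTranspose] using this.1
  set V : Matrix (Fin n) (Fin n) ℂ := U.submatrix id σ with hVdef
  have hVV : Vᴴ * V = 1 := by
    ext a b
    have h1 := congrFun (congrFun hUU (σ a)) (σ b)
    simp only [Matrix.mul_apply, Matrix.conjTranspose_apply, hVdef,
      Matrix.submatrix_apply, id] at h1 ⊢
    rw [h1]
    simp [Matrix.one_apply]
  have hVu : V * Vᴴ = 1 := mul_eq_one_comm.mp hVV
  have hVdet : IsUnit V.det := Matrix.isUnit_det_of_right_inverse hVu
  have hVhdet : IsUnit (Vᴴ).det := Matrix.isUnit_det_of_right_inverse hVV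
  have hXV : X = V * Matrix.diagonal (fun i : Fin n => ((hX.1.eigenvalues (σ i) : ℝ) : ℂ)) * Vᴴ := by
    have hd : Matrix.diagonal (fun i : Fin n => ((hX.1.eigenvalues (σ i) : ℝ) : ℂ))
        = (Matrix.diagonal (RCLike.ofReal ∘ hX.1.eigenvalues)).submatrix σ σ := by
      rw [Matrix.submatrix_diagonal_equiv]
      rfl
    rw [hd, hVdef, Matrix.conjTranspose_submatrix, Matrix.submatrix_mul_equiv,
      Matrix.submatrix_mul_equiv]
    rw [Matrix.submatrix_id_id]
    exact hX.1.spectral_theorem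
  -- layer-cake coefficients
  set y : ℕ → ℝ := fun m => if h : m < n then hX.1.eigenvalues (σ ⟨m, h⟩) else 0 with hy
  set c : ℕ → ℝ := fun k => y k - y (k + 1) with hcdef
  have hynn : ∀ m, 0 ≤ y m := by
    intro m
    by_cases h : m < n
    · simpa [hy, h] using hX.eigenvalues_nonneg (σ ⟨m, h⟩)
    · simp [hy, h]
  have hyanti : ∀ {a b : ℕ}, a ≤ b → y b ≤ y a := by
    intro a b hab
    by_cases hb : b < n
    · have ha : a < n := lt_of_le_of_lt hab hb
      simpa [hy, ha, hb] using hxanti (show (⟨a, ha⟩ : Fin n) ≤ ⟨b, hb⟩ from hab)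
    · calc y b = 0 := by simp [hy, hb]
        _ ≤ y a := hynn a
  have hcnn : ∀ k, 0 ≤ c k := fun k => sub_nonneg.2 (hyanti (Nat.le_succ k))
  have hyn : y n = 0 := by simp [hy]
  have hsumr : ∀ m : ℕ, ∑ k ∈ Finset.range m, c k = y 0 - y m := by
    intro m
    simp only [hcdef]
    exact Finset.sum_range_sub' y m
  have hxe : ∀ i : Fin n, hX.1.eigenvalues (σ i) = ∑ k ∈ Finset.Ico (i : ℕ) n, c k := by
    intro i
    rw [Finset.sum_Ico_eq_sub _ (le_of_lt i.isLt), hsumr, hsumr, hyn]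
    have h2 : y (i : ℕ) = hX.1.eigenvalues (σ i) := by simp [hy, i.isLt]
    rw [h2]
    ring
  set D : ℕ → Matrix (Fin n) (Fin n) ℂ :=
    fun k => Matrix.diagonal (fun i : Fin n => if (i : ℕ) ≤ k then (1 : ℂ) else 0) with hD
  have hdiagsum : Matrix.diagonal (fun i : Fin n => ((hX.1.eigenvalues (σ i) : ℝ) : ℂ))
      = ∑ k ∈ Finset.range n, (c k : ℂ) • D k := by
    ext i j
    rw [Matrix.sum_apply]
    by_cases hij : i = j
    · subst hij
      simp only [hD, Matrix.smul_apply, Matrix.diagonal_apply_eq, smul_eq_mul,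
        mul_ite, mul_one, mul_zero]
      have hfil : (Finset.range n).filter (fun k => (i : ℕ) ≤ k) = Finset.Ico (i : ℕ) n := by
        ext k
        simp only [Finset.mem_filter, Finset.mem_range, Finset.mem_Ico]
        exact and_comm
      rw [← Finset.sum_filter, hfil, hxe i]
      push_cast
      rfl
    · simp [hD, Matrix.diagonal_apply_ne _ hij]
  set P : ℕ → Matrix (Fin n) (Fin n) ℂ := fun k => V * D k * Vᴴ with hP
  have hDH : ∀ k, (D k)ᴴ = D k := by
    intro k
    have hstar : (star fun i : Fin n => if (i : ℕ) ≤ k then (1 : ℂ) else 0)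
        = fun i : Fin n => if (i : ℕ) ≤ k then (1 : ℂ) else 0 := by
      funext i
      by_cases h : (i : ℕ) ≤ k <;> simp [h]
    simp only [hD, Matrix.diagonal_conjTranspose, hstar]
  have hPH : ∀ k, (P k).IsHermitian := by
    intro k
    show (V * D k * Vᴴ)ᴴ = V * D k * Vᴴ
    simp [Matrix.conjTranspose_mul, hDH, Matrix.mul_assoc]
  have hPidem : ∀ k, P k * P k = P k := by
    intro k
    have hDD : D k * D k = D k := by
      have hmul : (fun i : Fin n => (if (i : ℕ) ≤ k then (1 : ℂ) else 0)
          * (if (i : ℕ) ≤ k then (1 : ℂ) else 0))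
          = fun i : Fin n => if (i : ℕ) ≤ k then (1 : ℂ) else 0 := by
        funext i
        by_cases h : (i : ℕ) ≤ k <;> simp [h]
      simp only [hD, Matrix.diagonal_mul_diagonal, hmul]
    show (V * D k * Vᴴ) * (V * D k * Vᴴ) = V * D k * Vᴴ
    simp only [Matrix.mul_assoc]
    rw [← Matrix.mul_assoc Vᴴ V, hVV, Matrix.one_mul, ← Matrix.mul_assoc (D k) (D k), hDD]
  have hrank : ∀ k, k < n → (P k).rank = k + 1 := by
    intro k hk
    show (V * D k * Vᴴ).rank = k + 1
    rw [Matrix.rank_mul_eq_left_of_isUnit_det Vᴴ (V * D k) hVhdet,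
      Matrix.rank_mul_eq_right_of_isUnit_det V (D k) hVdet]
    simp only [hD]
    rw [Matrix.rank_diagonal]
    have h2 : Finset.univ.filter
        (fun i : Fin n => (if (i : ℕ) ≤ k then (1 : ℂ) else 0) ≠ 0)
        = Finset.Iic (⟨k, hk⟩ : Fin n) := by
      ext i
      by_cases h : (i : ℕ) ≤ k <;> simp [h, Fin.le_def]
    rw [Fintype.card_subtype, h2, Fin.card_Iic]
  have hXsum : X = ∑ k ∈ Finset.range n, (c k : ℂ) • P k := by
    rw [hXV, hdiagsum, Finset.mul_sum, Finset.sum_mul]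
    refine Finset.sum_congr rfl fun k _ => ?_
    rw [mul_smul_comm, smul_mul_assoc]
  have hTrL : (Matrix.trace (Q * Φ X)).re
      = ∑ k ∈ Finset.range n, c k * (Matrix.trace (Q * Φ (P k))).re := by
    rw [hXsum]
    simp only [map_sum, _root_.map_smul, Finset.mul_sum, mul_smul_comm, Matrix.trace_sum,
      Matrix.trace_smul, smul_eq_mul, Complex.re_sum, Complex.re_ofReal_mul]
  set Qd : Matrix (Fin n) (Fin n) ℂ :=
    Matrix.diagonal (fun i : Fin n => if (i : ℕ) < Q.rank then (1 : ℂ) else 0) with hQd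
  have hTrR : (Matrix.trace (Qd *
        Φ (Matrix.diagonal (fun i : Fin n => ((hX.1.eigenvalues (σ i) : ℝ) : ℂ))))).re
      = ∑ k ∈ Finset.range n, c k * (Matrix.trace (Qd * Φ (D k))).re := by
    rw [hdiagsum]
    simp only [map_sum, _root_.map_smul, Finset.mul_sum, mul_smul_comm, Matrix.trace_sum,
      Matrix.trace_smul, smul_eq_mul, Complex.re_sum, Complex.re_ofReal_mul]
  rw [hTrL, hTrR]
  apply Finset.sum_le_sum
  intro k hk
  have hk' : k < n := Finset.mem_range.mp hk
  have step := hproj (P k) Q (hPH k) (hPidem k) hQ hQ2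
  have hDk : Matrix.diagonal (fun i : Fin n => if (i : ℕ) < (P k).rank then (1 : ℂ) else 0)
      = D k := by
    rw [hrank k hk']
    simp only [hD, Nat.lt_succ_iff]
  rw [hDk] at step
  exact mul_le_mul_of_nonneg_left step (hcnn k)
end

section
/- Let a be the annihilation operator on ℂ^{N+1} defined by a·e_n = √n·e_{n−1} (a·e_0 = 0), and let Π_n↓ = ∑_{i=0}^n e_i e_i† be the projection onto the first n+1 standard basis vectors. Then for n ≥ k: trace(Π_n↓·a·Π_k↓·a† − Π_n↓·Π_k↓·a†a) = 0, and for k ≥ n+1: trace(Π_n↓·a·Π_k↓·a† − Π_n↓·Π_k↓·a†a) = n+1. -/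
open ComplexOrder Matrix

/-- Trace identities for the truncated annihilation operator `a` on `ℂ^{N+1}` and the
projections `Π_m↓` onto the first `m+1` standard basis vectors:
for `n ≥ k` the trace of `Π_n↓ a Π_k↓ a† - Π_n↓ Π_k↓ a† a` is `0`, and for `k ≥ n+1`
it is `n+1`. -/
theorem truncated_annihilation_trace_identities (N : ℕ)
    (a : Matrix (Fin (N + 1)) (Fin (N + 1)) ℂ)
    (ha : ∀ i j : Fin (N + 1),
      a i j = if (i : ℕ) + 1 = (j : ℕ) then (Real.sqrt (j : ℕ) : ℂ) else 0)
    (Pj : ℕ → Matrix (Fin (N + 1)) (Fin (N + 1)) ℂ)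
    (hPj : ∀ m, Pj m = Matrix.diagonal (fun i : Fin (N + 1) => if (i : ℕ) ≤ m then (1 : ℂ) else 0))
    (n k : ℕ) (hn : n ≤ N) (hk : k ≤ N) :
    (k ≤ n → Matrix.trace (Pj n * a * Pj k * aᴴ - Pj n * Pj k * (aᴴ * a)) = 0) ∧
    (n + 1 ≤ k →
      Matrix.trace (Pj n * a * Pj k * aᴴ - Pj n * Pj k * (aᴴ * a)) = ((n : ℂ) + 1)) := by
  have hA : ∀ i : Fin (N + 1), (Pj n * a * Pj k * aᴴ) i i =
      if (i : ℕ) ≤ n ∧ (i : ℕ) + 1 ≤ k ∧ (i : ℕ) + 1 ≤ N then ((i : ℕ) + 1 : ℂ) else 0 := by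
    intro i
    rw [Matrix.mul_apply]
    simp only [hPj, Matrix.mul_diagonal, Matrix.diagonal_mul, Matrix.conjTranspose_apply, ha]
    by_cases hiN : (i : ℕ) + 1 ≤ N
    · rw [Finset.sum_eq_single (⟨(i : ℕ) + 1, by omega⟩ : Fin (N + 1))]
      · by_cases h1 : (i : ℕ) ≤ n <;> by_cases h2 : (i : ℕ) + 1 ≤ k <;>
          simp [h1, h2, hiN, Complex.star_def, Complex.conj_ofReal,
            ← Complex.ofReal_mul,
            Real.mul_self_sqrt (by positivity : (0:ℝ) ≤ ((i:ℕ):ℝ)+1)]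
      · intro b _ hb
        have : (i : ℕ) + 1 ≠ (b : ℕ) := by
          intro h; apply hb; apply Fin.ext; simp [← h]
        simp [this]
      · intro h; exact absurd (Finset.mem_univ _) h
    · rw [if_neg (by omega : ¬((i : ℕ) ≤ n ∧ (i : ℕ) + 1 ≤ k ∧ (i : ℕ) + 1 ≤ N))]
      apply Finset.sum_eq_zero
      intro b _
      have : (i : ℕ) + 1 ≠ (b : ℕ) := by have := b.isLt; omega
      simp [this]
  have hB : ∀ i : Fin (N + 1), (Pj n * Pj k * (aᴴ * a)) i i =
      if (i : ℕ) ≤ n ∧ (i : ℕ) ≤ k then ((i : ℕ) : ℂ) else 0 := by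
    intro i
    have haa : (aᴴ * a) i i = ((i : ℕ) : ℂ) := by
      rw [Matrix.mul_apply]
      simp only [Matrix.conjTranspose_apply, ha]
      by_cases h0 : 1 ≤ (i : ℕ)
      · rw [Finset.sum_eq_single (⟨(i : ℕ) - 1, by omega⟩ : Fin (N + 1))]
        · simp [(by omega : (i : ℕ) - 1 + 1 = (i : ℕ)), Complex.star_def,
            Complex.conj_ofReal, ← Complex.ofReal_mul,
            Real.mul_self_sqrt (Nat.cast_nonneg _)]
        · intro b _ hb
          have : ¬((b : ℕ) + 1 = (i : ℕ)) := by
            intro h; apply hb; apply Fin.ext; simp; omega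
          simp [this]
        · intro h; exact absurd (Finset.mem_univ _) h
      · have hi0 : (i : ℕ) = 0 := by omega
        simp [hi0]
    rw [hPj, hPj, Matrix.diagonal_mul_diagonal, Matrix.diagonal_mul, haa]
    by_cases h1 : (i : ℕ) ≤ n <;> by_cases h2 : (i : ℕ) ≤ k <;> simp [h1, h2]
  have htr : Matrix.trace (Pj n * a * Pj k * aᴴ - Pj n * Pj k * (aᴴ * a)) =
      ∑ i ∈ Finset.range (N + 1),
        ((if i ≤ n ∧ i + 1 ≤ k ∧ i + 1 ≤ N then ((i : ℂ) + 1) else 0)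
          - (if i ≤ n ∧ i ≤ k then (i : ℂ) else 0)) := by
    rw [Matrix.trace, ← Fin.sum_univ_eq_sum_range
      (fun i => ((if i ≤ n ∧ i + 1 ≤ k ∧ i + 1 ≤ N then ((i : ℂ) + 1) else 0)
          - (if i ≤ n ∧ i ≤ k then (i : ℂ) else 0)))]
    apply Finset.sum_congr rfl
    intro i _
    simp only [Matrix.diag_apply, Matrix.sub_apply, hA, hB]
    try push_cast
    try ring
  constructor
  · intro hkn
    rw [htr]
    have hcong : ∀ i ∈ Finset.range (N + 1),
        ((if i ≤ n ∧ i + 1 ≤ k ∧ i + 1 ≤ N then ((i : ℂ) + 1) else 0)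
          - (if i ≤ n ∧ i ≤ k then (i : ℂ) else 0))
        = (fun m : ℕ => if m ≤ k then (m : ℂ) else 0) (i + 1)
          - (fun m : ℕ => if m ≤ k then (m : ℂ) else 0) i := by
      intro i _
      simp only
      have h1 : (i ≤ n ∧ i + 1 ≤ k ∧ i + 1 ≤ N) ↔ i + 1 ≤ k := by omega
      have h2 : (i ≤ n ∧ i ≤ k) ↔ i ≤ k := by omega
      rw [if_congr h1 rfl rfl, if_congr h2 rfl rfl]
      push_cast
      split_ifs <;> ring
    rw [Finset.sum_congr rfl hcong, Finset.sum_range_sub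
      (fun m : ℕ => if m ≤ k then (m : ℂ) else 0)]
    rw [if_neg (by omega : ¬(N + 1 ≤ k)), if_pos (Nat.zero_le k)]
    simp
  · intro hnk
    rw [htr]
    have hcong : ∀ i ∈ Finset.range (N + 1),
        ((if i ≤ n ∧ i + 1 ≤ k ∧ i + 1 ≤ N then ((i : ℂ) + 1) else 0)
          - (if i ≤ n ∧ i ≤ k then (i : ℂ) else 0))
        = (if i ≤ n then (1 : ℂ) else 0) := by
      intro i _
      have h1 : (i ≤ n ∧ i + 1 ≤ k ∧ i + 1 ≤ N) ↔ i ≤ n := by omega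
      have h2 : (i ≤ n ∧ i ≤ k) ↔ i ≤ n := by omega
      rw [if_congr h1 rfl rfl, if_congr h2 rfl rfl]
      split_ifs <;> ring
    rw [Finset.sum_congr rfl hcong,
      ← Finset.sum_subset (Finset.range_subset_range.mpr (by omega : n + 1 ≤ N + 1))
        (fun x _ hx => by rw [if_neg (by simpa using hx)])]
    rw [Finset.sum_congr rfl
      (fun m hm => if_pos (Nat.lt_succ_iff.mp (Finset.mem_range.mp hm)))]
    simp
end
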